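/- arXiv:math/0312100 — 11 statements merged into one kernel-verified Lean document; each statement's English description precedes it below -/
import Mathlib

section
/- There exists a unique formal power series G(x,w) ∈ ℚ[[x,w]] satisfying the equation x·w·G_ww = w·(G_w)² + (1−x)·G_w − 1 (where G_w and G_ww denote the first and second formal partial derivatives of G with respect to w) together with the initial condition G(x,0) = −Σ_{a≥2} B_a/(a(a−1)) · x^a. -/
open PowerSeries

open Finset


noncomputable def vv : ℕ → ℚ
  | 0 => 1
  | (k+1) => -∑ i ∈ (range (k+1)).attach, vv i * vv (k - i.1)
  decreasing_by
  · exact Nat.lt_succ_of_le (Nat.le_of_lt_succ (mem_range.mp i.2))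
  · exact Nat.lt_succ_of_le (Nat.sub_le _ _)

noncomputable def uu : ℚ⟦X⟧ := PowerSeries.mk vv

lemma uu_eq : X * (uu * uu) + uu = 1 := by
  ext k
  rcases k with _ | k
  · simp [uu, coeff_zero_eq_constantCoeff, vv]
  · rw [map_add, coeff_succ_X_mul, coeff_one, coeff_mul,
      Finset.Nat.sum_antidiagonal_eq_sum_range_succ_mk]
    simp only [uu, coeff_mk]
    rw [show vv (k+1) = -∑ i ∈ (range (k+1)).attach, vv i * vv (k - i.1) from by rw [vv],
      ← Finset.sum_attach (range (k+1)) (fun i => vv i * vv (k - i))]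
    simp

/-- Uniqueness of the power series solution of `X t² + t = 1`. -/
lemma quad_unique (t : ℚ⟦X⟧) (h : X * (t * t) + t = 1) : t = uu := by
  have key : ∀ k, ∀ j ≤ k, coeff j t = vv j := by
    intro k
    induction k with
    | zero =>
      intro j hj; interval_cases j
      have := congrArg constantCoeff h
      simpa [vv, coeff_zero_eq_constantCoeff] using this
    | succ k ih =>
      intro j hj
      rcases Nat.lt_succ_iff_lt_or_eq.mp (Nat.lt_succ_of_le hj) with h' | rfl
      · exact ih j (Nat.lt_succ_iff.mp h')
      · have := congrArg (coeff (k+1)) h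
        rw [map_add, coeff_succ_X_mul, coeff_one, coeff_mul,
          Finset.Nat.sum_antidiagonal_eq_sum_range_succ_mk] at this
        simp only [Nat.succ_ne_zero, if_false] at this
        have hsum : ∑ i ∈ range (k+1), coeff i t * coeff (k-i) t
            = ∑ i ∈ range (k+1), vv i * vv (k - i) := by
          refine Finset.sum_congr rfl fun i hi => ?_
          rw [ih i (Nat.le_of_lt_succ (mem_range.mp hi)), ih (k-i) (Nat.sub_le _ _)]
        rw [hsum] at this
        have : coeff (k+1) t = -∑ i ∈ range (k+1), vv i * vv (k - i) := by linarith
        rw [this, show vv (k+1) = -∑ i ∈ (range (k+1)).attach, vv i * vv (k - i.1) from by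
          rw [vv], ← Finset.sum_attach (range (k+1)) (fun i => vv i * vv (k - i))]
  ext j
  simp [uu, key j j le_rfl]

lemma const_uu : constantCoeff uu = 1 := by simp [uu, ← coeff_zero_eq_constantCoeff, vv]

noncomputable def VV : ℚ⟦X⟧ := (1 + 2 * X * uu)⁻¹

lemma hVV : (1 + 2 * X * uu) * VV = 1 :=
  PowerSeries.mul_inv_cancel _ (by simp)

lemma ne_zero_1 : (1 + 2 * X * uu : ℚ⟦X⟧) ≠ 0 := by
  intro h
  have := hVV; rw [h, zero_mul] at this; exact one_ne_zero this.symm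

/-- antiderivative -/
noncomputable def integ (c : ℚ) (h : ℚ⟦X⟧) : ℚ⟦X⟧ :=
  PowerSeries.mk fun k => if k = 0 then c else coeff (k-1) h / k

lemma D_integ (c : ℚ) (h : ℚ⟦X⟧) : d⁄dX ℚ (integ c h) = h := by
  ext k
  rw [PowerSeries.coeff_derivative]
  simp only [integ, coeff_mk, Nat.succ_ne_zero, if_false, Nat.add_sub_cancel]
  field_simp
  push_cast; ring

lemma const_integ (c : ℚ) (h : ℚ⟦X⟧) : constantCoeff (integ c h) = c := by
  simp [integ, ← coeff_zero_eq_constantCoeff]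

lemma eq_of_D_eq {f g : ℚ⟦X⟧} (h1 : d⁄dX ℚ f = d⁄dX ℚ g)
    (h2 : constantCoeff f = constantCoeff g) : f = g := by
  ext k
  rcases k with _ | k
  · simpa [coeff_zero_eq_constantCoeff] using h2
  · have := congrArg (coeff k) h1
    rw [PowerSeries.coeff_derivative, PowerSeries.coeff_derivative] at this
    have hk : ((k : ℚ) + 1) ≠ 0 := by positivity
    exact mul_right_cancel₀ hk this

noncomputable def gd : ℕ → ℚ⟦X⟧
  | 0 => uu
  | (m+1) => VV * (X * d⁄dX ℚ (gd m) + gd m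
      - X * ∑ k ∈ (range m).attach,
          have _h1 : k.1 + 1 < m + 1 := Nat.succ_lt_succ (mem_range.mp k.2)
          have _h2 : m - k.1 < m + 1 := Nat.lt_succ_of_le (Nat.sub_le _ _)
          gd (k.1+1) * gd (m - k.1))

lemma gd_succ (m : ℕ) : (1 + 2 * X * uu) * gd (m+1)
    = X * d⁄dX ℚ (gd m) + gd m - X * ∑ k ∈ range m, gd (k+1) * gd (m - k) := by
  rw [show gd (m+1) = VV * (X * d⁄dX ℚ (gd m) + gd m
      - X * ∑ k ∈ (range m).attach, gd (k.1+1) * gd (m - k.1)) from by rw [gd],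
    ← mul_assoc, hVV, one_mul, ← Finset.sum_attach (range m) (fun k => gd (k+1) * gd (m-k))]

lemma antidiag_split (m : ℕ) (h : ℕ → ℚ⟦X⟧) :
    ∑ p ∈ Finset.HasAntidiagonal.antidiagonal (m+1), h p.1 * h p.2
      = h 0 * h (m+1) + h (m+1) * h 0 + ∑ k ∈ range m, h (k+1) * h (m-k) := by
  rw [Finset.Nat.sum_antidiagonal_eq_sum_range_succ_mk, Finset.sum_range_succ',
    Finset.sum_range_succ]
  simp only [Nat.succ_sub_succ, Nat.sub_self, Nat.sub_zero]
  ring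

noncomputable def gg (n : ℕ) : ℚ⟦X⟧ :=
  integ (if 2 ≤ n then -(bernoulli n / ((n : ℚ) * ((n : ℚ) - 1))) else 0) (gd n)

lemma D_gg (n : ℕ) : d⁄dX ℚ (gg n) = gd n := D_integ _ _

lemma gd_zero : gd 0 = uu := by rw [gd]

noncomputable def Gsol : PowerSeries (PowerSeries ℚ) := PowerSeries.mk gg


/-- The formal partial derivative with respect to the inner variable `w`
of an element of `ℚ⟦w⟧⟦x⟧` (outer variable `x`, inner variable `w`). -/
noncomputable def dw (F : PowerSeries (PowerSeries ℚ)) : PowerSeries (PowerSeries ℚ) :=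
  PowerSeries.mk fun n => d⁄dX ℚ (PowerSeries.coeff (R := PowerSeries ℚ) n F)

/-- The series `-∑_{a ≥ 2} B_a/(a(a-1)) xᵃ`, where `B_a` are the Bernoulli numbers
(convention `B_1 = -1/2`, i.e. generating function `x/(eˣ - 1)`). -/
noncomputable def icSeries : PowerSeries ℚ :=
  PowerSeries.mk fun a => if 2 ≤ a then -(bernoulli a / ((a : ℚ) * ((a : ℚ) - 1))) else 0

/-- `G ∈ ℚ⟦x,w⟧` (realized as `ℚ⟦w⟧⟦x⟧`, with `x` the outer and `w` the inner variable)
satisfies `x·w·G_ww = w·(G_w)² + (1-x)·G_w - 1` together with the initial condition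
`G(x,0) = -∑_{a≥2} B_a/(a(a-1)) xᵃ`. -/
def IsG (G : PowerSeries (PowerSeries ℚ)) : Prop :=
  PowerSeries.X * PowerSeries.C (R := PowerSeries ℚ) PowerSeries.X * dw (dw G) =
      PowerSeries.C (R := PowerSeries ℚ) PowerSeries.X * (dw G) ^ 2 +
        (1 - PowerSeries.X) * dw G - 1 ∧
  PowerSeries.map (PowerSeries.constantCoeff (R := ℚ)) G = icSeries

section coeffs
variable (G : PowerSeries (PowerSeries ℚ))

lemma cL0 : coeff 0 (PowerSeries.X * PowerSeries.C (R := PowerSeries ℚ) PowerSeries.X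
    * dw (dw G)) = 0 := by
  rw [mul_assoc, coeff_zero_X_mul]

lemma cLs (m : ℕ) : coeff (m+1) (PowerSeries.X * PowerSeries.C (R := PowerSeries ℚ) PowerSeries.X
    * dw (dw G)) = X * d⁄dX ℚ (d⁄dX ℚ (coeff m G)) := by
  rw [mul_assoc, coeff_succ_X_mul, PowerSeries.coeff_C_mul]
  simp only [dw, coeff_mk]

lemma cSq (n : ℕ) : coeff n (PowerSeries.C (R := PowerSeries ℚ) PowerSeries.X * (dw G) ^ 2)
    = X * ∑ p ∈ Finset.HasAntidiagonal.antidiagonal n, d⁄dX ℚ (coeff p.1 G) * d⁄dX ℚ (coeff p.2 G) := by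
  rw [PowerSeries.coeff_C_mul, pow_two, PowerSeries.coeff_mul]
  simp only [dw, coeff_mk]

lemma cLin0 : coeff 0 ((1 - PowerSeries.X) * dw G) = d⁄dX ℚ (coeff 0 G) := by
  rw [sub_mul, one_mul, map_sub, coeff_zero_X_mul, sub_zero]
  simp only [dw, coeff_mk]

lemma cLins (m : ℕ) : coeff (m+1) ((1 - PowerSeries.X) * dw G)
    = d⁄dX ℚ (coeff (m+1) G) - d⁄dX ℚ (coeff m G) := by
  rw [sub_mul, one_mul, map_sub, coeff_succ_X_mul]
  simp only [dw, coeff_mk]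

end coeffs

/-- Extraction of the coefficient equations from the PDE. -/
lemma pde_iff (G : PowerSeries (PowerSeries ℚ)) :
    (PowerSeries.X * PowerSeries.C (R := PowerSeries ℚ) PowerSeries.X * dw (dw G) =
      PowerSeries.C (R := PowerSeries ℚ) PowerSeries.X * (dw G) ^ 2 +
        (1 - PowerSeries.X) * dw G - 1) ↔
    ((X * (d⁄dX ℚ (coeff 0 G) * d⁄dX ℚ (coeff 0 G)) + d⁄dX ℚ (coeff 0 G) = 1) ∧
     ∀ m : ℕ, X * d⁄dX ℚ (d⁄dX ℚ (coeff m G))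
        = X * ∑ p ∈ Finset.HasAntidiagonal.antidiagonal (m+1),
            d⁄dX ℚ (coeff p.1 G) * d⁄dX ℚ (coeff p.2 G)
          + d⁄dX ℚ (coeff (m+1) G) - d⁄dX ℚ (coeff m G)) := by
  have c1 : ∀ n : ℕ, coeff n (1 : PowerSeries (PowerSeries ℚ))
      = if n = 0 then 1 else 0 := coeff_one
  constructor
  · intro h
    constructor
    · have := congrArg (coeff 0) h
      rw [cL0, map_sub, map_add, cSq, cLin0, c1, if_pos rfl,
        Finset.Nat.antidiagonal_zero, Finset.sum_singleton] at this
      linear_combination -this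
    · intro m
      have := congrArg (coeff (m+1)) h
      rw [cLs, map_sub, map_add, cSq, cLins, c1, if_neg (Nat.succ_ne_zero m)] at this
      linear_combination this
  · rintro ⟨h0, hs⟩
    refine PowerSeries.ext fun n => ?_
    rcases n with _ | m
    · rw [cL0, map_sub, map_add, cSq, cLin0, c1, if_pos rfl,
        Finset.Nat.antidiagonal_zero, Finset.sum_singleton]
      linear_combination -h0
    · rw [cLs, map_sub, map_add, cSq, cLins, c1, if_neg (Nat.succ_ne_zero m)]
      linear_combination hs m

lemma isG_Gsol : IsG Gsol := by
  constructor
  · rw [pde_iff]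
    constructor
    · simp only [Gsol, coeff_mk, D_gg, gd_zero]
      exact uu_eq
    · intro m
      simp only [Gsol, coeff_mk, D_gg]
      rw [antidiag_split m gd, gd_zero]
      linear_combination -gd_succ m
  · ext a
    simp [Gsol, icSeries, gg, const_integ]

lemma uniq (G : PowerSeries (PowerSeries ℚ)) (hG : IsG G) : G = Gsol := by
  obtain ⟨hpde, hic⟩ := hG
  rw [pde_iff] at hpde
  obtain ⟨h0, hs⟩ := hpde
  have hd : ∀ n, ∀ j ≤ n, d⁄dX ℚ (coeff j G) = gd j := by
    intro n
    induction n with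
    | zero =>
      intro j hj; interval_cases j
      rw [gd_zero]
      exact quad_unique _ h0
    | succ m ih =>
      intro j hj
      rcases Nat.lt_succ_iff_lt_or_eq.mp (Nat.lt_succ_of_le hj) with h' | rfl
      · exact ih j (Nat.lt_succ_iff.mp h')
      · have hm := hs m
        rw [antidiag_split m (fun i => d⁄dX ℚ (coeff i G))] at hm
        have hmid : ∑ k ∈ range m, d⁄dX ℚ (coeff (k+1) G) * d⁄dX ℚ (coeff (m-k) G)
            = ∑ k ∈ range m, gd (k+1) * gd (m-k) := by
          refine Finset.sum_congr rfl fun k hk => ?_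
          rw [ih (k+1) (mem_range.mp hk), ih (m-k) (Nat.sub_le _ _)]
        rw [hmid, ih m le_rfl, ih 0 (Nat.zero_le _), gd_zero] at hm
        refine mul_left_cancel₀ ne_zero_1 ?_
        rw [gd_succ m]
        linear_combination -hm
  refine PowerSeries.ext fun n => ?_
  rw [Gsol, coeff_mk]
  refine eq_of_D_eq ?_ ?_
  · rw [D_gg, hd n n le_rfl]
  · rw [gg, const_integ]
    have := congrArg (coeff n) hic
    simpa [icSeries] using this


/-- There exists a unique formal power series `G(x,w) ∈ ℚ⟦x,w⟧` satisfying
`x·w·G_ww = w·(G_w)² + (1-x)·G_w - 1` and `G(x,0) = -∑_{a≥2} B_a/(a(a-1)) xᵃ`. -/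
theorem statement0 : ∃! G : PowerSeries (PowerSeries ℚ), IsG G :=
  ⟨Gsol, isG_Gsol, fun G hG => uniq G hG⟩
end

section
/- Let A₀(w) ∈ ℚ[[w]] be the power series obtained from G_w = ∂G/∂w by setting x = 0. Then A₀(w) = Σ_{n≥0} (−1)^n C_n w^n; in particular w·A₀(w)² + A₀(w) − 1 = 0 and (1 + 2w·A₀(w))² = 1 + 4w hold in ℚ[[w]]. -/
open PowerSeries

lemma catalan_eq_of_quadratic (A : PowerSeries ℚ)
    (heq : PowerSeries.X * A ^ 2 + A - 1 = 0) :
    A = PowerSeries.mk (fun n => (-1 : ℚ) ^ n * (catalan n : ℚ)) := by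
  ext n
  induction n using Nat.strong_induction_on with
  | _ n ih =>
    match n with
    | 0 =>
      have h0 := congrArg (PowerSeries.coeff (R := ℚ) 0) heq
      simp only [map_add, map_sub, coeff_zero_eq_constantCoeff, map_mul, constantCoeff_X,
        zero_mul, map_one, map_zero, zero_add] at h0
      simp [coeff_zero_eq_constantCoeff, sub_eq_zero.mp h0]
    | n + 1 =>
      have h1 := congrArg (PowerSeries.coeff (R := ℚ) (n + 1)) heq
      rw [map_zero, map_sub, map_add, PowerSeries.coeff_succ_X_mul] at h1
      have hone : (PowerSeries.coeff (R := ℚ) (n + 1)) (1 : PowerSeries ℚ) = 0 := by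
        simp [PowerSeries.coeff_one]
      rw [hone] at h1
      have hsq : (PowerSeries.coeff (R := ℚ) n) (A ^ 2) =
          ∑ p ∈ Finset.HasAntidiagonal.antidiagonal n, (PowerSeries.coeff (R := ℚ) p.1 A) * (PowerSeries.coeff (R := ℚ) p.2 A) := by
        rw [sq, PowerSeries.coeff_mul]
      have hsum : (PowerSeries.coeff (R := ℚ) n) (A ^ 2) =
          (-1 : ℚ) ^ n * ∑ p ∈ Finset.HasAntidiagonal.antidiagonal n, ((catalan p.1 : ℚ) * (catalan p.2 : ℚ)) := by
        rw [hsq, Finset.mul_sum]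
        refine Finset.sum_congr rfl fun p hp => ?_
        rw [Finset.HasAntidiagonal.mem_antidiagonal] at hp
        rw [ih p.1 (by omega), ih p.2 (by omega), PowerSeries.coeff_mk, PowerSeries.coeff_mk]
        have : (-1 : ℚ) ^ p.1 * (-1 : ℚ) ^ p.2 = (-1 : ℚ) ^ n := by
          rw [← pow_add, hp]
        ring_nf
        rw [← hp]
        ring
      have hcat : ((catalan (n + 1) : ℚ)) =
          ∑ p ∈ Finset.HasAntidiagonal.antidiagonal n, ((catalan p.1 : ℚ) * (catalan p.2 : ℚ)) := by
        rw [catalan_succ]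
        push_cast
        rw [Finset.Nat.sum_antidiagonal_eq_sum_range_succ_mk,
          ← Fin.sum_univ_eq_sum_range fun i => ((catalan i : ℚ) * (catalan (n - i) : ℚ))]
      rw [PowerSeries.coeff_mk]
      have : (PowerSeries.coeff (R := ℚ) (n+1)) A = -(PowerSeries.coeff (R := ℚ) n) (A ^ 2) := by
        linarith [h1]
      rw [this, hsum, ← hcat]
      ring

/-- Let `A₀(w) ∈ ℚ⟦w⟧` be the power series obtained from `G_w` by setting `x = 0`.
Then `A₀(w) = ∑ (-1)ⁿ Cₙ wⁿ` with `Cₙ` the Catalan numbers; in particular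
`w·A₀² + A₀ - 1 = 0` and `(1 + 2w·A₀)² = 1 + 4w` in `ℚ⟦w⟧`. -/
theorem statement1 (G : PowerSeries (PowerSeries ℚ)) (hG : IsG G)
    (A₀ : PowerSeries ℚ)
    (hA₀ : A₀ = PowerSeries.constantCoeff (R := PowerSeries ℚ) (dw G)) :
    A₀ = PowerSeries.mk (fun n => (-1 : ℚ) ^ n * (catalan n : ℚ)) ∧
      PowerSeries.X * A₀ ^ 2 + A₀ - 1 = 0 ∧
      (1 + 2 * PowerSeries.X * A₀) ^ 2 = 1 + 4 * PowerSeries.X := by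
  have h := congrArg (PowerSeries.constantCoeff (R := PowerSeries ℚ)) hG.1
  simp only [map_mul, map_add, map_sub, map_pow, map_one, constantCoeff_X, constantCoeff_C,
    zero_mul, mul_zero, sub_zero, one_mul] at h
  rw [← hA₀] at h
  have heq : PowerSeries.X * A₀ ^ 2 + A₀ - 1 = 0 := by
    linear_combination -h
  refine ⟨catalan_eq_of_quadratic A₀ heq, heq, ?_⟩
  linear_combination (4 * (PowerSeries.X : PowerSeries ℚ)) * heq
end

section
/- The formal power series G_w = ∂G/∂w ∈ ℚ[[x,w]] has the expansion G_w(x,w) = A₀(w) + x·R(w)^{−2} + Σ_{k≥1} Σ_{j=0}^{k} x^{k+1}·q_{k,j}·(−w)^j·R(w)^{−2j−k−2}, where A₀(w) = Σ_{n≥0} (−1)^n C_n w^n. -/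
open PowerSeries Finset

/-- `q : ℕ → ℕ → ℤ` satisfies the defining recursion. -/
def IsQ (q : ℕ → ℕ → ℤ) : Prop :=
  q 0 0 = 1 ∧
  (∀ k j, k < j → q k j = 0) ∧
  (∀ k j, 1 ≤ k → j ≤ k →
    q k j = (2 * (k : ℤ) + 4 * (j : ℤ) - 2) * (if j = 0 then 0 else q (k - 1) (j - 1))
      + ((j : ℤ) + 1) * q (k - 1) j
      + ∑ m ∈ Finset.range k, ∑ l ∈ Finset.range j, q m l * q (k - 1 - m) (j - 1 - l))

/-! ### Auxiliary material -/

namespace St3Aux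

/-- `A₀(w) = ∑ (-1)ⁿ Cₙ wⁿ`. -/
noncomputable def A0 : PowerSeries ℚ := PowerSeries.mk fun m => (-1:ℚ)^m * (catalan m : ℚ)

lemma catA0 : (X : ℚ⟦X⟧) * A0^2 + A0 = 1 := by
  ext n
  rw [map_add]
  cases n with
  | zero => simp [A0]
  | succ n =>
    rw [coeff_succ_X_mul, coeff_one, pow_two, PowerSeries.coeff_mul]
    have h1 : ∀ p ∈ Finset.HasAntidiagonal.antidiagonal n,
        (coeff (R := ℚ) p.1 A0) * (coeff (R := ℚ) p.2 A0) = (-1:ℚ)^n * ((catalan p.1 * catalan p.2 : ℕ) : ℚ) := by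
      rintro ⟨a,b⟩ hab
      rw [Finset.HasAntidiagonal.mem_antidiagonal] at hab
      simp only [A0, coeff_mk]
      push_cast
      rw [← hab]
      ring
    rw [Finset.sum_congr rfl h1, ← Finset.mul_sum, ← Nat.cast_sum, ← catalan_succ']
    simp [A0, pow_succ]

lemma two_ne : (2:ℚ⟦X⟧) ≠ 0 := by
  intro h
  have h' := congrArg (constantCoeff (R := ℚ)) h
  rw [show (2:ℚ⟦X⟧) = C (R := ℚ) 2 from (map_ofNat (C (R := ℚ)) 2).symm, constantCoeff_C] at h'
  simp at h'

lemma hRB (R : ℚ⟦X⟧) (hR0 : PowerSeries.constantCoeff (R := ℚ) R = 1)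
    (hR2 : R ^ 2 = 1 + 4 * PowerSeries.X) : R = 1 + 2 * X * A0 := by
  have hfac : (R - (1+2*X*A0)) * (R + (1+2*X*A0)) = 0 := by
    linear_combination hR2 - (4*(X:ℚ⟦X⟧))*catA0
  rcases mul_eq_zero.1 hfac with h | h
  · exact sub_eq_zero.mp h
  · exfalso
    have h2 := congrArg (constantCoeff (R := ℚ)) h
    simp [hR0] at h2

lemma hRs (R : ℚ⟦X⟧) (hR0 : PowerSeries.constantCoeff (R := ℚ) R = 1) : R * R⁻¹ = 1 :=
  PowerSeries.mul_inv_cancel R (by rw [hR0]; norm_num)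

lemma hdR (R : ℚ⟦X⟧) (hR0 : PowerSeries.constantCoeff (R := ℚ) R = 1)
    (hR2 : R ^ 2 = 1 + 4 * PowerSeries.X) : d⁄dX ℚ R = 2 * R⁻¹ := by
  have hd4 : d⁄dX ℚ (4:ℚ⟦X⟧) = 0 := by
    rw [show (4:ℚ⟦X⟧) = C (R := ℚ) 4 from (map_ofNat (C (R := ℚ)) 4).symm, PowerSeries.derivative_C]
  have h1 : d⁄dX ℚ (R^2) = d⁄dX ℚ (1 + 4*X) := by rw [hR2]
  rw [Derivation.leibniz_pow] at h1
  simp [hd4] at h1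
  have h3 : (2:ℚ⟦X⟧) * (R * d⁄dX ℚ R) = 2 * (2 * 1) := by rw [h1]; norm_num
  have h4 := mul_left_cancel₀ two_ne h3
  linear_combination R⁻¹ * h4 - (d⁄dX ℚ R) * hRs R hR0

lemma hds (R : ℚ⟦X⟧) (hR0 : PowerSeries.constantCoeff (R := ℚ) R = 1)
    (hR2 : R ^ 2 = 1 + 4 * PowerSeries.X) : d⁄dX ℚ (R⁻¹) = -2 * (R⁻¹)^3 := by
  rw [PowerSeries.derivative_inv', hdR R hR0 hR2]
  ring

lemma dspow (R : ℚ⟦X⟧) (hR0 : PowerSeries.constantCoeff (R := ℚ) R = 1)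
    (hR2 : R ^ 2 = 1 + 4 * PowerSeries.X) :
    ∀ e : ℕ, d⁄dX ℚ ((R⁻¹)^e) = -(2*((e:ℕ):ℚ⟦X⟧)) * (R⁻¹)^(e+2) := by
  intro e
  induction e with
  | zero => simp
  | succ e ih =>
    rw [pow_succ, Derivation.leibniz, ih, hds R hR0 hR2]
    push_cast
    rw [smul_eq_mul, smul_eq_mul]
    ring

lemma xdpow : ∀ j : ℕ, (X:ℚ⟦X⟧) * d⁄dX ℚ ((-X)^j) = ((j:ℕ):ℚ⟦X⟧) * (-X)^j := by
  intro j
  induction j with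
  | zero => simp
  | succ j ih =>
    rw [pow_succ, Derivation.leibniz, smul_eq_mul, smul_eq_mul]
    push_cast
    have h : (X:ℚ⟦X⟧) * ((-X)^j * d⁄dX ℚ (-X) + -X * d⁄dX ℚ ((-X)^j)) =
        (-X)^j * (X * d⁄dX ℚ (-X)) + (-X) * (X * d⁄dX ℚ ((-X)^j)) := by ring
    rw [h, ih]
    simp
    ring

lemma Tder (R : ℚ⟦X⟧) (hR0 : PowerSeries.constantCoeff (R := ℚ) R = 1)
    (hR2 : R ^ 2 = 1 + 4 * PowerSeries.X) (j e : ℕ) :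
    (X:ℚ⟦X⟧) * d⁄dX ℚ ((-X)^j * (R⁻¹)^e)
      = ((j:ℕ):ℚ⟦X⟧) * ((-X)^j * (R⁻¹)^e)
        + (2*((e:ℕ):ℚ⟦X⟧)) * ((-X)^(j+1) * (R⁻¹)^(e+2)) := by
  rw [Derivation.leibniz, smul_eq_mul, smul_eq_mul, dspow R hR0 hR2 e]
  have hx := xdpow j
  linear_combination ((R⁻¹)^e) * hx

lemma tri {M : Type*} [AddCommMonoid M] (h : ℕ → ℕ → M) :
    ∀ N : ℕ, ∑ j ∈ range N, ∑ l ∈ range j, h j l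
      = ∑ l ∈ range N, ∑ d ∈ range (N - 1 - l), h (l + d + 1) l := by
  intro N
  induction N with
  | zero => simp
  | succ N ih =>
    rw [Finset.sum_range_succ, ih, Finset.sum_range_succ]
    simp only [Nat.sub_sub]
    rw [show N + 1 - (1 + N) = 0 by omega]
    simp only [Finset.range_zero, Finset.sum_empty, add_zero]
    rw [← Finset.sum_add_distrib]
    apply Finset.sum_congr rfl
    intro l hl
    rw [Finset.mem_range] at hl
    rw [show N + 1 - (1 + l) = (N - (1+l)) + 1 by omega, Finset.sum_range_succ,
      show l + (N - (1+l)) + 1 = N by omega]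

lemma convSum {M : Type*} [CommRing M] (a b : ℕ → M) (F : ℕ → M) (A B : ℕ)
    (ha : ∀ l, A ≤ l → a l = 0) (hb : ∀ l, B ≤ l → b l = 0) :
    ∑ j ∈ range (A+B), (∑ l ∈ range j, a l * b (j-1-l)) * F j
      = ∑ l ∈ range A, ∑ l' ∈ range B, a l * b l' * F (l+l'+1) := by
  have h1 : ∀ j ∈ range (A+B), (∑ l ∈ range j, a l * b (j-1-l)) * F j
      = ∑ l ∈ range j, a l * b (j-1-l) * F j := by
    intro j _; rw [Finset.sum_mul]
  rw [Finset.sum_congr rfl h1, tri]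
  simp only [Nat.add_sub_cancel, Nat.add_sub_cancel_left]
  rw [← Finset.sum_subset (Finset.range_subset_range.2 (Nat.le_add_right A B))]
  · apply Finset.sum_congr rfl
    intro l hl
    rw [Finset.mem_range] at hl
    apply (Finset.sum_subset (Finset.range_subset_range.2 (by omega : B ≤ A+B-1-l)) ?_).symm
    intro d _ hd
    rw [Finset.mem_range, not_lt] at hd
    rw [hb d hd]
    ring
  · intro l _ hl
    rw [Finset.mem_range, not_lt] at hl
    apply Finset.sum_eq_zero
    intro d _
    rw [ha l hl]
    ring

noncomputable def FF (R : ℚ⟦X⟧) (k j : ℕ) : ℚ⟦X⟧ := (-X)^j * (R⁻¹)^(2*j+k+2)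

lemma hA0d (R : ℚ⟦X⟧) (hR0 : PowerSeries.constantCoeff (R := ℚ) R = 1)
    (hR2 : R ^ 2 = 1 + 4 * PowerSeries.X) :
    (X:ℚ⟦X⟧) * d⁄dX ℚ A0 = R⁻¹ - A0 := by
  have hB := hRB R hR0 hR2
  have h1 : d⁄dX ℚ R = d⁄dX ℚ (1 + (X*A0 + X*A0)) := by
    rw [show (1:ℚ⟦X⟧) + (X*A0+X*A0) = 1 + 2*X*A0 from by ring, ← hB]
  rw [hdR R hR0 hR2, map_add, map_add, Derivation.leibniz, smul_eq_mul, smul_eq_mul,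
    PowerSeries.derivative_X] at h1
  simp only [map_one, Derivation.map_one_eq_zero, zero_add, mul_one] at h1
  have h3 : (2:ℚ⟦X⟧) * (X * d⁄dX ℚ A0) = 2 * (R⁻¹ - A0) := by linear_combination -h1
  exact mul_left_cancel₀ two_ne h3

/-- The coefficients of the candidate solution. -/
noncomputable def AA (R : ℚ⟦X⟧) (q : ℕ → ℕ → ℤ) (n : ℕ) : ℚ⟦X⟧ :=
  if n = 0 then A0 else
    ∑ j ∈ range n, ((q (n-1) j : ℤ) : ℚ⟦X⟧) * ((-X)^j * (R⁻¹)^(2*j+(n-1)+2))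

lemma AA_zero (R : ℚ⟦X⟧) (q : ℕ → ℕ → ℤ) : AA R q 0 = A0 := by simp [AA]

lemma AA_succ (R : ℚ⟦X⟧) (q : ℕ → ℕ → ℤ) (n : ℕ) :
    AA R q (n+1) = ∑ j ∈ range (n+1),
      ((q n j : ℤ) : ℚ⟦X⟧) * ((-X)^j * (R⁻¹)^(2*j+n+2)) := by
  simp [AA]

lemma dQ (q : ℕ → ℕ → ℤ) (n j : ℕ) : d⁄dX ℚ (((q n j : ℤ) : ℚ⟦X⟧)) = 0 := by
  rw [show (((q n j : ℤ)) : ℚ⟦X⟧) = C (R := ℚ) ((q n j : ℤ) : ℚ) from (map_intCast (C (R := ℚ)) _).symm,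
    PowerSeries.derivative_C]

lemma main (R : ℚ⟦X⟧) (hR0 : PowerSeries.constantCoeff (R := ℚ) R = 1)
    (hR2 : R ^ 2 = 1 + 4 * PowerSeries.X) (q : ℕ → ℕ → ℤ) (hq : IsQ q) (n : ℕ) :
    R * AA R q (n+1) = AA R q n + X * d⁄dX ℚ (AA R q n)
      - X * ∑ i ∈ range n, AA R q (i+1) * AA R q (n-i) := by
  obtain ⟨hq1, hq2, hq3⟩ := hq
  cases n with
  | zero =>
    rw [AA_zero, AA_succ]
    norm_num [hq1, hA0d R hR0 hR2]
    have h2 : R * (R⁻¹:ℚ⟦X⟧)^2 = R⁻¹ := by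
      rw [pow_two, ← mul_assoc, hRs R hR0, one_mul]
    linear_combination h2
  | succ k =>
    -- LHS
    have hL : R * AA R q (k+2) = ∑ j ∈ range (k+2), ((q (k+1) j : ℤ) : ℚ⟦X⟧) * FF R k j := by
      rw [AA_succ, Finset.mul_sum]
      apply Finset.sum_congr rfl
      intro j _
      have he : 2*j+(k+1)+2 = (2*j+k+2)+1 := by omega
      have h2 : R * (R⁻¹:ℚ⟦X⟧)^((2*j+k+2)+1) = (R⁻¹)^(2*j+k+2) := by
        rw [pow_succ', ← mul_assoc, hRs R hR0, one_mul]
      rw [he, FF]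
      linear_combination (((q (k+1) j : ℤ) : ℚ⟦X⟧) * (-X)^j) * h2
    -- split via recursion
    have hsplit : ∑ j ∈ range (k+2), ((q (k+1) j : ℤ) : ℚ⟦X⟧) * FF R k j
        = (∑ j ∈ range (k+2), ((2*((k:ℤ)+1)+4*(j:ℤ)-2 : ℤ) : ℚ⟦X⟧)
              * (if j = 0 then 0 else ((q k (j-1) : ℤ) : ℚ⟦X⟧)) * FF R k j)
          + (∑ j ∈ range (k+2), (((j:ℤ)+1 : ℤ) : ℚ⟦X⟧) * ((q k j : ℤ) : ℚ⟦X⟧) * FF R k j)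
          + (∑ j ∈ range (k+2), (∑ m ∈ range (k+1), ∑ l ∈ range j,
              ((q m l : ℤ) : ℚ⟦X⟧) * ((q (k-m) (j-1-l) : ℤ) : ℚ⟦X⟧)) * FF R k j) := by
      rw [← Finset.sum_add_distrib, ← Finset.sum_add_distrib]
      apply Finset.sum_congr rfl
      intro j hj
      rw [Finset.mem_range] at hj
      have hr := hq3 (k+1) j (by omega) (by omega)
      simp only [Nat.add_sub_cancel] at hr
      have hr2 := congrArg (fun z : ℤ => ((z : ℚ⟦X⟧))) hr
      push_cast [apply_ite (fun z : ℤ => ((z : ℚ⟦X⟧)))] at hr2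
      rw [hr2]
      push_cast
      ring
    have hS1 : (∑ j ∈ range (k+2), ((2*((k:ℤ)+1)+4*(j:ℤ)-2 : ℤ) : ℚ⟦X⟧)
              * (if j = 0 then 0 else ((q k (j-1) : ℤ) : ℚ⟦X⟧)) * FF R k j)
        = ∑ j ∈ range (k+1), ((q k j : ℤ) : ℚ⟦X⟧)
            * (2*(((2*j+k+2 : ℕ)):ℚ⟦X⟧) * FF R k (j+1)) := by
      rw [Finset.sum_range_succ']
      simp only [Nat.add_sub_cancel, Nat.succ_ne_zero, if_false, if_true, ite_true, ite_false,
        eq_self_iff_true, mul_zero, zero_mul, add_zero]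
      apply Finset.sum_congr rfl
      intro i _
      push_cast
      ring
    have hS2 : (∑ j ∈ range (k+2), (((j:ℤ)+1 : ℤ) : ℚ⟦X⟧) * ((q k j : ℤ) : ℚ⟦X⟧) * FF R k j)
        = ∑ j ∈ range (k+1), (((j:ℤ)+1 : ℤ) : ℚ⟦X⟧) * ((q k j : ℤ) : ℚ⟦X⟧) * FF R k j := by
      rw [Finset.sum_range_succ, hq2 k (k+1) (by omega)]
      simp
    have hS3 : (∑ j ∈ range (k+2), (∑ m ∈ range (k+1), ∑ l ∈ range j,
              ((q m l : ℤ) : ℚ⟦X⟧) * ((q (k-m) (j-1-l) : ℤ) : ℚ⟦X⟧)) * FF R k j)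
        = ∑ m ∈ range (k+1), ∑ l ∈ range (m+1), ∑ l' ∈ range (k+1-m),
            ((q m l : ℤ) : ℚ⟦X⟧) * ((q (k-m) l' : ℤ) : ℚ⟦X⟧) * FF R k (l+l'+1) := by
      have h1 : ∀ j ∈ range (k+2), (∑ m ∈ range (k+1), ∑ l ∈ range j,
              ((q m l : ℤ) : ℚ⟦X⟧) * ((q (k-m) (j-1-l) : ℤ) : ℚ⟦X⟧)) * FF R k j
          = ∑ m ∈ range (k+1), (∑ l ∈ range j,
              ((q m l : ℤ) : ℚ⟦X⟧) * ((q (k-m) (j-1-l) : ℤ) : ℚ⟦X⟧)) * FF R k j := by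
        intro j _
        rw [Finset.sum_mul]
      rw [Finset.sum_congr rfl h1, Finset.sum_comm]
      apply Finset.sum_congr rfl
      intro m hm
      rw [Finset.mem_range] at hm
      have hc := convSum (fun l => ((q m l : ℤ) : ℚ⟦X⟧)) (fun l' => ((q (k-m) l' : ℤ) : ℚ⟦X⟧))
        (FF R k) (m+1) (k+1-m)
        (fun l hl => by show ((q m l : ℤ) : ℚ⟦X⟧) = 0; rw [hq2 m l (by omega)]; exact Int.cast_zero)
        (fun l hl => by
          show ((q (k-m) l : ℤ) : ℚ⟦X⟧) = 0; rw [hq2 (k-m) l (by omega)]; exact Int.cast_zero)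
      rw [show (m+1)+(k+1-m) = k+2 from by omega] at hc
      exact hc
    -- RHS pieces
    have hA : AA R q (k+1) = ∑ j ∈ range (k+1), ((q k j : ℤ) : ℚ⟦X⟧) * FF R k j := by
      rw [AA_succ]
      apply Finset.sum_congr rfl
      intro j _
      rw [FF]
    have hD : X * d⁄dX ℚ (AA R q (k+1))
        = ∑ j ∈ range (k+1), ((q k j : ℤ) : ℚ⟦X⟧)
            * ((((j:ℕ)):ℚ⟦X⟧) * FF R k j + 2*(((2*j+k+2 : ℕ)):ℚ⟦X⟧) * FF R k (j+1)) := by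
      rw [AA_succ, map_sum, Finset.mul_sum]
      apply Finset.sum_congr rfl
      intro j _
      rw [Derivation.leibniz, smul_eq_mul, smul_eq_mul, dQ q k j, mul_zero, add_zero]
      have ht := Tder R hR0 hR2 j (2*j+k+2)
      rw [FF, FF, show 2*(j+1)+k+2 = (2*j+k+2)+2 from by omega]
      linear_combination ((q k j : ℤ) : ℚ⟦X⟧) * ht
    have hC : X * ∑ i ∈ range (k+1), AA R q (i+1) * AA R q (k+1-i)
        = - ∑ m ∈ range (k+1), ∑ l ∈ range (m+1), ∑ l' ∈ range (k+1-m),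
            ((q m l : ℤ) : ℚ⟦X⟧) * ((q (k-m) l' : ℤ) : ℚ⟦X⟧) * FF R k (l+l'+1) := by
      rw [Finset.mul_sum, ← Finset.sum_neg_distrib]
      apply Finset.sum_congr rfl
      intro i hi
      rw [Finset.mem_range] at hi
      rw [show k+1-i = (k-i)+1 from by omega, AA_succ, AA_succ, Finset.sum_mul_sum,
        Finset.mul_sum, ← Finset.sum_neg_distrib]
      apply Finset.sum_congr rfl
      intro l _
      rw [Finset.mul_sum, ← Finset.sum_neg_distrib]
      apply Finset.sum_congr rfl
      intro l' _
      rw [FF, show 2*(l+l'+1)+k+2 = (2*l+i+2) + (2*l'+(k-i)+2) from by omega, pow_add]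
      ring
    -- combine
    rw [hL, hsplit, hS1, hS2, hS3, hD, hC, hA, sub_neg_eq_add]
    have hmerge : (∑ j ∈ range (k+1), ((q k j : ℤ) : ℚ⟦X⟧)
            * (2*(((2*j+k+2 : ℕ)):ℚ⟦X⟧) * FF R k (j+1)))
          + (∑ j ∈ range (k+1), (((j:ℤ)+1 : ℤ) : ℚ⟦X⟧) * ((q k j : ℤ) : ℚ⟦X⟧) * FF R k j)
        = (∑ j ∈ range (k+1), ((q k j : ℤ) : ℚ⟦X⟧) * FF R k j)
          + ∑ j ∈ range (k+1), ((q k j : ℤ) : ℚ⟦X⟧)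
            * ((((j:ℕ)):ℚ⟦X⟧) * FF R k j + 2*(((2*j+k+2 : ℕ)):ℚ⟦X⟧) * FF R k (j+1)) := by
      rw [← Finset.sum_add_distrib, ← Finset.sum_add_distrib]
      apply Finset.sum_congr rfl
      intro j _
      push_cast
      ring
    linear_combination hmerge

/-! ### Coefficient extraction for the PDE -/

def Eqn (H : PowerSeries (PowerSeries ℚ)) : Prop :=
  PowerSeries.X * PowerSeries.C (R := PowerSeries ℚ) PowerSeries.X * dw H =
      PowerSeries.C (R := PowerSeries ℚ) PowerSeries.X * H ^ 2 +
        (1 - PowerSeries.X) * H - 1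

noncomputable abbrev cf (n : ℕ) (H : PowerSeries (PowerSeries ℚ)) : ℚ⟦X⟧ :=
  PowerSeries.coeff (R := PowerSeries ℚ) n H

lemma cl0 (H : PowerSeries (PowerSeries ℚ)) :
    PowerSeries.coeff (R := PowerSeries ℚ) 0
      (PowerSeries.X * PowerSeries.C (R := PowerSeries ℚ) PowerSeries.X * dw H) = 0 := by
  rw [show (PowerSeries.X * PowerSeries.C (R := PowerSeries ℚ) PowerSeries.X * dw H)
      = PowerSeries.C (R := PowerSeries ℚ) PowerSeries.X * (PowerSeries.X * dw H) from by ring,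
    PowerSeries.coeff_C_mul, PowerSeries.coeff_zero_X_mul, mul_zero]

lemma cls (H : PowerSeries (PowerSeries ℚ)) (n : ℕ) :
    PowerSeries.coeff (R := PowerSeries ℚ) (n+1)
      (PowerSeries.X * PowerSeries.C (R := PowerSeries ℚ) PowerSeries.X * dw H)
      = PowerSeries.X * d⁄dX ℚ (cf n H) := by
  rw [show (PowerSeries.X * PowerSeries.C (R := PowerSeries ℚ) PowerSeries.X * dw H)
      = PowerSeries.C (R := PowerSeries ℚ) PowerSeries.X * (PowerSeries.X * dw H) from by ring,
    PowerSeries.coeff_C_mul, PowerSeries.coeff_succ_X_mul, dw, PowerSeries.coeff_mk]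

lemma cr0 (H : PowerSeries (PowerSeries ℚ)) :
    PowerSeries.coeff (R := PowerSeries ℚ) 0
      (PowerSeries.C (R := PowerSeries ℚ) PowerSeries.X * H ^ 2 + (1 - PowerSeries.X) * H - 1)
      = PowerSeries.X * (cf 0 H * cf 0 H) + cf 0 H - 1 := by
  rw [map_sub, map_add, PowerSeries.coeff_C_mul, pow_two, PowerSeries.coeff_mul,
    sub_mul, one_mul, map_sub, PowerSeries.coeff_zero_X_mul, PowerSeries.coeff_one]
  simp [Finset.Nat.antidiagonal_zero, cf, PowerSeries.coeff_zero_eq_constantCoeff]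

lemma crs (H : PowerSeries (PowerSeries ℚ)) (n : ℕ) :
    PowerSeries.coeff (R := PowerSeries ℚ) (n+1)
      (PowerSeries.C (R := PowerSeries ℚ) PowerSeries.X * H ^ 2 + (1 - PowerSeries.X) * H - 1)
      = PowerSeries.X * ((∑ i ∈ range n, cf (i+1) H * cf (n-i) H)
          + cf (n+1) H * cf 0 H + cf 0 H * cf (n+1) H) + cf (n+1) H - cf n H := by
  rw [map_sub, map_add, PowerSeries.coeff_C_mul, pow_two, PowerSeries.coeff_mul,
    sub_mul, one_mul, map_sub, PowerSeries.coeff_succ_X_mul, PowerSeries.coeff_one,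
    Finset.Nat.sum_antidiagonal_eq_sum_range_succ_mk, Finset.sum_range_succ',
    Finset.sum_range_succ]
  simp only [Nat.succ_sub_succ_eq_sub, Nat.sub_self, Nat.sub_zero, if_neg (Nat.succ_ne_zero n)]
  ring

lemma unit_cancel (u x : ℚ⟦X⟧) (h : (1 + X * u) * x = 0) : x = 0 := by
  rcases mul_eq_zero.1 h with h1 | h1
  · exfalso
    have h2 := congrArg (constantCoeff (R := ℚ)) h1
    simp at h2
  · exact h1

lemma uniq (H K : PowerSeries (PowerSeries ℚ)) (hH : Eqn H) (hK : Eqn K) : H = K := by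
  refine PowerSeries.ext fun n => ?_
  induction n using Nat.strong_induction_on with
  | _ n IH =>
    cases n with
    | zero =>
      have eH := congrArg (PowerSeries.coeff (R := PowerSeries ℚ) 0) hH
      rw [cl0, cr0] at eH
      have eK := congrArg (PowerSeries.coeff (R := PowerSeries ℚ) 0) hK
      rw [cl0, cr0] at eK
      have key : (1 + X * (cf 0 H + cf 0 K)) * (cf 0 H - cf 0 K) = 0 := by
        linear_combination eK - eH
      exact sub_eq_zero.mp (unit_cancel _ _ key)
    | succ m =>
      have h0 := IH 0 (by omega)
      have hm := IH m (by omega)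
      have hM : ∑ i ∈ range m, cf (i+1) H * cf (m-i) H
          = ∑ i ∈ range m, cf (i+1) K * cf (m-i) K := by
        apply Finset.sum_congr rfl
        intro i hi
        rw [Finset.mem_range] at hi
        rw [show cf (i+1) H = cf (i+1) K from IH (i+1) (by omega),
          show cf (m-i) H = cf (m-i) K from IH (m-i) (by omega)]
      have hd : d⁄dX ℚ (cf m H) = d⁄dX ℚ (cf m K) := by rw [show cf m H = cf m K from hm]
      have eH := congrArg (PowerSeries.coeff (R := PowerSeries ℚ) (m+1)) hH
      rw [cls, crs] at eH
      have eK := congrArg (PowerSeries.coeff (R := PowerSeries ℚ) (m+1)) hK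
      rw [cls, crs] at eK
      have key : (1 + X * (cf 0 H + cf 0 K)) * (cf (m+1) H - cf (m+1) K) = 0 := by
        linear_combination (-1) * (eH - eK) + X*hd - X*hM + hm
          - (X*(cf (m+1) H + cf (m+1) K))*h0
      exact sub_eq_zero.mp (unit_cancel _ _ key)

lemma eqnE (R : ℚ⟦X⟧) (hR0 : PowerSeries.constantCoeff (R := ℚ) R = 1)
    (hR2 : R ^ 2 = 1 + 4 * PowerSeries.X) (q : ℕ → ℕ → ℤ) (hq : IsQ q) :
    Eqn (PowerSeries.mk fun n => AA R q n) := by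
  unfold Eqn
  refine PowerSeries.ext fun n => ?_
  cases n with
  | zero =>
    rw [cl0, cr0]
    simp only [cf, PowerSeries.coeff_mk, AA_zero]
    linear_combination (-1 : ℚ⟦X⟧) * catA0
  | succ n =>
    rw [cls, crs]
    simp only [cf, PowerSeries.coeff_mk, AA_zero]
    have hmain := main R hR0 hR2 q hq n
    have hB := hRB R hR0 hR2
    linear_combination (-1 : ℚ⟦X⟧) * hmain + (AA R q (n+1)) * hB

end St3Aux

/-- The expansion
`G_w(x,w) = A₀(w) + x·R(w)⁻² + ∑_{k≥1} ∑_{j=0}^{k} x^{k+1}·q_{k,j}·(-w)ʲ·R(w)^{-2j-k-2}`,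
where `A₀(w) = ∑ (-1)ⁿ Cₙ wⁿ` and `R(w)` is the unique square root of `1+4w` with
constant term `1`.  (The equality is an equality in `ℚ⟦w⟧⟦x⟧`; the right-hand
side is the power series in `x` whose coefficients are the indicated elements of
`ℚ⟦w⟧`, negative powers of `R` being powers of its inverse.) -/
theorem statement3 (G : PowerSeries (PowerSeries ℚ)) (hG : IsG G)
    (q : ℕ → ℕ → ℤ) (hq : IsQ q)
    (R : PowerSeries ℚ) (hR0 : PowerSeries.constantCoeff (R := ℚ) R = 1)
    (hR2 : R ^ 2 = 1 + 4 * PowerSeries.X) :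
    dw G = PowerSeries.mk fun n =>
      match n with
      | 0 => PowerSeries.mk fun m => (-1 : ℚ) ^ m * (catalan m : ℚ)
      | 1 => (R⁻¹) ^ 2
      | (k + 2) => ∑ j ∈ Finset.range (k + 2),
          PowerSeries.C (R := ℚ) ((q (k + 1) j : ℚ)) *
            ((-PowerSeries.X) ^ j * (R⁻¹) ^ (2 * j + (k + 1) + 2)) := by
  have hE := St3Aux.eqnE R hR0 hR2 q hq
  have h1 : St3Aux.Eqn (dw G) := hG.1
  have huniq := St3Aux.uniq (dw G) (PowerSeries.mk fun n => St3Aux.AA R q n) h1 hE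
  rw [huniq]
  refine PowerSeries.ext fun n => ?_
  rw [PowerSeries.coeff_mk, PowerSeries.coeff_mk]
  rcases n with _ | n
  · rw [St3Aux.AA_zero]
    rfl
  · rcases n with _ | k
    · rw [St3Aux.AA_succ]
      simp [hq.1]
    · rw [St3Aux.AA_succ]
      apply Finset.sum_congr rfl
      intro j _
      rw [map_intCast]
end

section
/- Define Q(x,u) := Σ_{k≥0} x^k·R(u)^k·( Σ_{j=0}^{k} q_{k,j}·u^j ) ∈ ℚ[[x,u]]. Then Q satisfies the functional equation Q = 1 + x·R(u)·( (1+4u)·∂(u·Q)/∂u + u·Q² ), and moreover Q is the unique formal power series in ℚ[[x,u]] satisfying this equation. -/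
open PowerSeries Finset

/-- The formal partial derivative with respect to the inner variable `u`
of an element of `ℚ⟦u⟧⟦x⟧` (outer variable `x`, inner variable `u`). -/
noncomputable def du (F : PowerSeries (PowerSeries ℚ)) : PowerSeries (PowerSeries ℚ) :=
  PowerSeries.mk fun n => d⁄dX ℚ (PowerSeries.coeff (R := PowerSeries ℚ) n F)

/-- `Q(x,u) := ∑_{k≥0} xᵏ·R(u)ᵏ·(∑_{j=0}^{k} q_{k,j} uʲ) ∈ ℚ⟦x,u⟧`, realized in
`ℚ⟦u⟧⟦x⟧` as the series in `x` with the indicated coefficients in `ℚ⟦u⟧`. -/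
noncomputable def Qser (q : ℕ → ℕ → ℤ) (R : PowerSeries ℚ) :
    PowerSeries (PowerSeries ℚ) :=
  PowerSeries.mk fun k =>
    R ^ k * ∑ j ∈ Finset.range (k + 1), PowerSeries.C (R := ℚ) ((q k j : ℚ)) * PowerSeries.X ^ j

noncomputable def Pp (q : ℕ → ℕ → ℤ) (k : ℕ) : PowerSeries ℚ :=
  PowerSeries.mk fun j => (q k j : ℚ)

noncomputable def Aa (q : ℕ → ℕ → ℤ) (k : ℕ) : PowerSeries ℚ :=
  PowerSeries.mk fun j => ((j:ℚ) + 1) * (q k j : ℚ)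

lemma qrec (q : ℕ → ℕ → ℤ) (hq : IsQ q) (n j : ℕ) :
    q (n+1) j = (2 * ((n:ℤ)+1) + 4 * (j : ℤ) - 2) * (if j = 0 then 0 else q n (j - 1))
      + ((j : ℤ) + 1) * q n j
      + ∑ m ∈ Finset.range (n+1), ∑ l ∈ Finset.range j, q m l * q (n - m) (j - 1 - l) := by
  rcases le_or_gt j (n+1) with h | h
  · have h2 := hq.2.2 (n+1) j (by omega) h
    simpa using h2
  · have hz := hq.2.1
    rw [hz (n+1) j (by omega), hz n j (by omega), if_neg (by omega : ¬ j = 0), hz n (j-1) (by omega)]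
    rw [Finset.sum_eq_zero]
    · ring
    intro m hm
    rw [Finset.sum_eq_zero]
    intro l hl
    simp only [Finset.mem_range] at hm hl
    rcases le_or_gt l m with h1 | h1
    · rw [hz _ _ (by omega : n - m < j - 1 - l), mul_zero]
    · rw [hz _ _ h1, zero_mul]

lemma hA (q : ℕ → ℕ → ℤ) (k : ℕ) :
    Pp q k + PowerSeries.X * d⁄dX ℚ (Pp q k) = Aa q k := by
  ext j
  cases j with
  | zero => simp [Pp, Aa, coeff_zero_X_mul]
  | succ l =>
    rw [map_add, coeff_succ_X_mul, coeff_derivative]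
    simp [Pp, Aa]
    ring

lemma hPsum (q : ℕ → ℕ → ℤ) (hq : IsQ q) (k : ℕ) :
    ∑ j ∈ Finset.range (k + 1), PowerSeries.C (R := ℚ) ((q k j : ℚ)) * PowerSeries.X ^ j = Pp q k := by
  ext j
  rw [map_sum, Pp, coeff_mk]
  simp only [coeff_C_mul, coeff_X_pow, mul_ite, mul_one, mul_zero]
  rw [Finset.sum_ite_eq (Finset.range (k+1)) j]
  simp only [Finset.mem_range]
  split_ifs with h
  · rfl
  · rw [hq.2.1 k j (by omega)]; simp

lemma hRR' (R : PowerSeries ℚ) (hR2 : R ^ 2 = 1 + 4 * PowerSeries.X) :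
    R * d⁄dX ℚ R = 2 := by
  have h := congrArg (d⁄dX ℚ) hR2
  rw [pow_two, Derivation.leibniz, smul_eq_mul] at h
  have hd : d⁄dX ℚ (1 + 4 * PowerSeries.X : PowerSeries ℚ) = 4 := by
    ext n
    rw [coeff_derivative]
    simp [coeff_one]
    cases n with
    | zero => norm_num
    | succ m =>
      rw [show (4:PowerSeries ℚ) = PowerSeries.C (R := ℚ) 4 from (map_ofNat (PowerSeries.C (R := ℚ)) 4).symm,
        coeff_succ_C]
      ring
  rw [hd] at h
  have h2 : (2 : PowerSeries ℚ) ≠ 0 := by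
    intro hc
    have h3 := congrArg (PowerSeries.constantCoeff (R := ℚ)) hc
    rw [map_ofNat, map_zero] at h3
    norm_num at h3
  apply mul_left_cancel₀ h2
  linear_combination h

lemma h4R (R : PowerSeries ℚ) (hR2 : R ^ 2 = 1 + 4 * PowerSeries.X) (m : ℕ) :
    (1 + 4 * PowerSeries.X) * d⁄dX ℚ (R ^ m) = 2 * (m : PowerSeries ℚ) * R ^ m := by
  induction m with
  | zero => simp
  | succ m ih =>
    rw [pow_succ, Derivation.leibniz, smul_eq_mul, smul_eq_mul]
    have hr := hRR' R hR2
    push_cast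
    linear_combination R * ih - R ^ m * (d⁄dX ℚ R) * hR2 + R ^ (m+1) * hr

lemma keyP (q : ℕ → ℕ → ℤ) (hq : IsQ q) (n : ℕ) :
    Pp q (n+1) = Aa q n + PowerSeries.C (R := ℚ) 4 * (PowerSeries.X * Aa q n)
      + PowerSeries.C (R := ℚ) (2*(n:ℚ)) * (PowerSeries.X * Pp q n)
      + PowerSeries.X * ∑ p ∈ Finset.HasAntidiagonal.antidiagonal n, Pp q p.1 * Pp q p.2 := by
  ext j
  rw [map_add, map_add, map_add, coeff_C_mul, coeff_C_mul]
  cases j with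
  | zero =>
    rw [coeff_zero_X_mul, coeff_zero_X_mul, coeff_zero_X_mul]
    simp only [Pp, Aa, coeff_mk, mul_zero, add_zero]
    have h := qrec q hq n 0
    simp only [if_pos rfl, Finset.range_zero, Finset.sum_empty, Finset.sum_const_zero,
      mul_zero, zero_add, add_zero, Nat.cast_zero] at h
    rw [h]
    push_cast
    ring
  | succ l =>
    rw [coeff_succ_X_mul, coeff_succ_X_mul, coeff_succ_X_mul, map_sum]
    simp only [Pp, Aa, coeff_mk, coeff_mul]
    have h := qrec q hq n (l+1)
    rw [if_neg (by omega)] at h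
    have h' := congrArg (Int.cast : ℤ → ℚ) h
    push_cast at h'
    have hsum : ∑ p ∈ Finset.HasAntidiagonal.antidiagonal n, ∑ r ∈ Finset.HasAntidiagonal.antidiagonal l,
          ((q p.1 r.1 : ℚ)) * (q p.2 r.2 : ℚ)
        = ∑ m ∈ Finset.range (n+1), ∑ i ∈ Finset.range (l+1),
            ((q m i : ℚ)) * (q (n-m) (l-i) : ℚ) := by
      rw [Finset.Nat.sum_antidiagonal_eq_sum_range_succ_mk]
      refine Finset.sum_congr rfl fun m hm => ?_
      rw [Finset.Nat.sum_antidiagonal_eq_sum_range_succ_mk]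
    rw [hsum]
    have hidx : ∀ m i : ℕ, l + 1 - 1 - i = l - i := fun m i => by omega
    try simp only [Nat.add_sub_cancel] at h'
    push_cast
    linarith [h']

lemma coeffEq (q : ℕ → ℕ → ℤ) (hq : IsQ q) (R : PowerSeries ℚ)
    (hR2 : R ^ 2 = 1 + 4 * PowerSeries.X) (n : ℕ) :
    R^(n+1) * Pp q (n+1) = R * ((1 + 4*PowerSeries.X) * d⁄dX ℚ (PowerSeries.X * (R^n * Pp q n))
      + PowerSeries.X * ∑ p ∈ Finset.HasAntidiagonal.antidiagonal n,
          (R^p.1 * Pp q p.1) * (R^p.2 * Pp q p.2)) := by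
  have hS : ∑ p ∈ Finset.HasAntidiagonal.antidiagonal n, (R^p.1 * Pp q p.1) * (R^p.2 * Pp q p.2)
      = R^n * ∑ p ∈ Finset.HasAntidiagonal.antidiagonal n, Pp q p.1 * Pp q p.2 := by
    rw [Finset.mul_sum]
    refine Finset.sum_congr rfl fun p hp => ?_
    rw [Finset.HasAntidiagonal.mem_antidiagonal] at hp
    rw [← hp, pow_add]; ring
  have hd : d⁄dX ℚ (PowerSeries.X * (R^n * Pp q n))
      = R^n * Pp q n + PowerSeries.X * ((d⁄dX ℚ (R^n)) * Pp q n + R^n * d⁄dX ℚ (Pp q n)) := by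
    rw [Derivation.leibniz, Derivation.leibniz, smul_eq_mul, smul_eq_mul, smul_eq_mul,
      smul_eq_mul, derivative_X]
    ring
  rw [hS, hd, keyP q hq n]
  have h4 := h4R R hR2 n
  have hA' := hA q n
  have hc : PowerSeries.C (R := ℚ) (2*(n:ℚ)) = 2 * (n : PowerSeries ℚ) := by
    rw [map_mul, map_natCast, map_ofNat]
  have hc4 : PowerSeries.C (R := ℚ) (4:ℚ) = (4 : PowerSeries ℚ) := map_ofNat _ 4
  rw [hc, hc4]
  linear_combination (-(R^(n+1) * (1 + 4*PowerSeries.X))) * hA' - R * PowerSeries.X * (Pp q n) * h4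

lemma hcoeff (R : PowerSeries ℚ) (n : ℕ) (F : PowerSeries (PowerSeries ℚ)) :
    PowerSeries.coeff (R := PowerSeries ℚ) (n+1) (1 + PowerSeries.X * PowerSeries.C (R := PowerSeries ℚ) R *
        (PowerSeries.C (R := PowerSeries ℚ) (1 + 4 * PowerSeries.X) *
            du (PowerSeries.C (R := PowerSeries ℚ) PowerSeries.X * F) +
          PowerSeries.C (R := PowerSeries ℚ) PowerSeries.X * F ^ 2))
    = R * ((1 + 4*PowerSeries.X) *
          d⁄dX ℚ (PowerSeries.X * PowerSeries.coeff (R := PowerSeries ℚ) n F)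
        + PowerSeries.X * ∑ p ∈ Finset.HasAntidiagonal.antidiagonal n,
            PowerSeries.coeff (R := PowerSeries ℚ) p.1 F * PowerSeries.coeff (R := PowerSeries ℚ) p.2 F) := by
  rw [map_add, mul_assoc, coeff_succ_X_mul, coeff_C_mul, map_add, coeff_C_mul, coeff_C_mul]
  have h1 : PowerSeries.coeff (R := PowerSeries ℚ) (n+1) 1 = 0 := by
    rw [coeff_one, if_neg (by omega)]
  rw [h1, zero_add, du, coeff_mk, coeff_C_mul, sq, coeff_mul]

lemma hczero (R : PowerSeries ℚ) (F : PowerSeries (PowerSeries ℚ)) :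
    PowerSeries.coeff (R := PowerSeries ℚ) 0 (1 + PowerSeries.X * PowerSeries.C (R := PowerSeries ℚ) R *
        (PowerSeries.C (R := PowerSeries ℚ) (1 + 4 * PowerSeries.X) *
            du (PowerSeries.C (R := PowerSeries ℚ) PowerSeries.X * F) +
          PowerSeries.C (R := PowerSeries ℚ) PowerSeries.X * F ^ 2)) = 1 := by
  rw [map_add, mul_assoc, coeff_zero_X_mul, coeff_one, if_pos rfl, add_zero]

lemma hQc (q : ℕ → ℕ → ℤ) (hq : IsQ q) (R : PowerSeries ℚ) (k : ℕ) :
    PowerSeries.coeff (R := PowerSeries ℚ) k (Qser q R) = R^k * Pp q k := by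
  rw [Qser, coeff_mk, hPsum q hq k]

lemma Pzero (q : ℕ → ℕ → ℤ) (hq : IsQ q) : Pp q 0 = 1 := by
  ext j
  cases j with
  | zero => simp [Pp, hq.1, coeff_one]
  | succ l => simp [Pp, hq.2.1 0 (l+1) (by omega), coeff_one]

lemma part1 (q : ℕ → ℕ → ℤ) (hq : IsQ q)
    (R : PowerSeries ℚ) (hR2 : R ^ 2 = 1 + 4 * PowerSeries.X) :
    Qser q R = 1 + PowerSeries.X * PowerSeries.C (R := PowerSeries ℚ) R *
        (PowerSeries.C (R := PowerSeries ℚ) (1 + 4 * PowerSeries.X) *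
            du (PowerSeries.C (R := PowerSeries ℚ) PowerSeries.X * Qser q R) +
          PowerSeries.C (R := PowerSeries ℚ) PowerSeries.X * (Qser q R) ^ 2) := by
  refine PowerSeries.ext fun k => ?_
  cases k with
  | zero =>
    rw [hczero, hQc q hq, pow_zero, one_mul, Pzero q hq]
  | succ n =>
    rw [hcoeff, hQc q hq]
    have hs : ∑ p ∈ Finset.HasAntidiagonal.antidiagonal n,
          PowerSeries.coeff (R := PowerSeries ℚ) p.1 (Qser q R) *
            PowerSeries.coeff (R := PowerSeries ℚ) p.2 (Qser q R)
        = ∑ p ∈ Finset.HasAntidiagonal.antidiagonal n, (R^p.1 * Pp q p.1) * (R^p.2 * Pp q p.2) :=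
      Finset.sum_congr rfl fun p _ => by rw [hQc q hq, hQc q hq]
    rw [hs, hQc q hq]
    exact coeffEq q hq R hR2 n

/-- `Q` satisfies `Q = 1 + x·R(u)·((1+4u)·∂(u·Q)/∂u + u·Q²)`, and it is the unique
formal power series in `ℚ⟦x,u⟧` satisfying this equation. Here `R(u)` is the unique
square root of `1+4u` with constant term `1`. -/
theorem statement4 (q : ℕ → ℕ → ℤ) (hq : IsQ q)
    (R : PowerSeries ℚ) (hR0 : PowerSeries.constantCoeff (R := ℚ) R = 1)
    (hR2 : R ^ 2 = 1 + 4 * PowerSeries.X) :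
    (Qser q R = 1 + PowerSeries.X * PowerSeries.C (R := PowerSeries ℚ) R *
        (PowerSeries.C (R := PowerSeries ℚ) (1 + 4 * PowerSeries.X) *
            du (PowerSeries.C (R := PowerSeries ℚ) PowerSeries.X * Qser q R) +
          PowerSeries.C (R := PowerSeries ℚ) PowerSeries.X * (Qser q R) ^ 2)) ∧
    ∀ Q' : PowerSeries (PowerSeries ℚ),
      (Q' = 1 + PowerSeries.X * PowerSeries.C (R := PowerSeries ℚ) R *
          (PowerSeries.C (R := PowerSeries ℚ) (1 + 4 * PowerSeries.X) *
              du (PowerSeries.C (R := PowerSeries ℚ) PowerSeries.X * Q') +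
            PowerSeries.C (R := PowerSeries ℚ) PowerSeries.X * Q' ^ 2)) →
      Q' = Qser q R := by
  have hQ1 := part1 q hq R hR2
  refine ⟨hQ1, fun F hF => ?_⟩
  refine PowerSeries.ext fun k => ?_
  induction k using Nat.strong_induction_on with
  | _ k ih =>
    cases k with
    | zero =>
      conv_lhs => rw [hF]
      conv_rhs => rw [hQ1]
      rw [hczero, hczero]
    | succ n =>
      have e1 : PowerSeries.coeff (R := PowerSeries ℚ) (n+1) F
          = R * ((1 + 4*PowerSeries.X) *
              d⁄dX ℚ (PowerSeries.X * PowerSeries.coeff (R := PowerSeries ℚ) n F)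
            + PowerSeries.X * ∑ p ∈ Finset.HasAntidiagonal.antidiagonal n,
                PowerSeries.coeff (R := PowerSeries ℚ) p.1 F *
                  PowerSeries.coeff (R := PowerSeries ℚ) p.2 F) := by
        conv_lhs => rw [hF]
        exact hcoeff R n F
      have e2 : PowerSeries.coeff (R := PowerSeries ℚ) (n+1) (Qser q R)
          = R * ((1 + 4*PowerSeries.X) *
              d⁄dX ℚ (PowerSeries.X * PowerSeries.coeff (R := PowerSeries ℚ) n (Qser q R))
            + PowerSeries.X * ∑ p ∈ Finset.HasAntidiagonal.antidiagonal n,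
                PowerSeries.coeff (R := PowerSeries ℚ) p.1 (Qser q R) *
                  PowerSeries.coeff (R := PowerSeries ℚ) p.2 (Qser q R)) := by
        conv_lhs => rw [hQ1]
        exact hcoeff R n (Qser q R)
      have hs : ∑ p ∈ Finset.HasAntidiagonal.antidiagonal n,
            PowerSeries.coeff (R := PowerSeries ℚ) p.1 F * PowerSeries.coeff (R := PowerSeries ℚ) p.2 F
          = ∑ p ∈ Finset.HasAntidiagonal.antidiagonal n,
              PowerSeries.coeff (R := PowerSeries ℚ) p.1 (Qser q R) *
                PowerSeries.coeff (R := PowerSeries ℚ) p.2 (Qser q R) := by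
        refine Finset.sum_congr rfl fun p hp => ?_
        rw [Finset.HasAntidiagonal.mem_antidiagonal] at hp
        rw [ih p.1 (by omega), ih p.2 (by omega)]
      rw [e1, e2, ih n (by omega), hs]
end

section
/- For every integer k ≥ 1, the identity d/du ( R(u)^k · Σ_{j=0}^{k} c_{k,j}·u^j ) = R(u)^{k−2} · Σ_{j=0}^{k} q_{k,j}·u^j holds in ℚ[[u]]. -/
open PowerSeries Finset

/-- `c : ℕ → ℕ → ℚ` satisfies the defining relations: `c k j = 0` for `j > k`, and
`q k j = (2k+4j)·c k j + (j+1)·c k (j+1)` for all `k ≥ 1` and `0 ≤ j ≤ k`. -/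
def IsC (q : ℕ → ℕ → ℤ) (c : ℕ → ℕ → ℚ) : Prop :=
  (∀ k j, k < j → c k j = 0) ∧
  (∀ k j, 1 ≤ k → j ≤ k →
    (q k j : ℚ) = (2 * (k : ℚ) + 4 * (j : ℚ)) * c k j + ((j : ℚ) + 1) * c k (j + 1))

lemma coeff_sumCXpow (a : ℕ → ℚ) (k n : ℕ) :
    PowerSeries.coeff n (∑ j ∈ Finset.range (k + 1),
      PowerSeries.C (a j) * PowerSeries.X ^ j) = if n ≤ k then a n else 0 := by
  simp [coeff_X_pow, mul_ite, Finset.sum_ite_eq, Nat.lt_succ_iff]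

/-- For every integer `k ≥ 1`, `d/du (R(u)ᵏ · ∑_{j=0}^{k} c_{k,j} uʲ) =
R(u)^{k-2} · ∑_{j=0}^{k} q_{k,j} uʲ` in `ℚ⟦u⟧`, where `R(u)` is the unique square
root of `1+4u` with constant term `1` (and `R^{k-2}` is written `Rᵏ·(R⁻¹)²`). -/
theorem statement6 (q : ℕ → ℕ → ℤ) (hq : IsQ q) (c : ℕ → ℕ → ℚ) (hc : IsC q c)
    (R : PowerSeries ℚ) (hR0 : PowerSeries.constantCoeff R = 1)
    (hR2 : R ^ 2 = 1 + 4 * PowerSeries.X) :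
    ∀ k : ℕ, 1 ≤ k →
      d⁄dX ℚ (R ^ k * ∑ j ∈ Finset.range (k + 1),
          PowerSeries.C (c k j) * PowerSeries.X ^ j) =
        R ^ k * (R⁻¹) ^ 2 * ∑ j ∈ Finset.range (k + 1),
          PowerSeries.C ((q k j : ℚ)) * PowerSeries.X ^ j := by
  intro k hk
  obtain ⟨m, rfl⟩ : ∃ m, k = m + 1 := ⟨k - 1, (Nat.succ_pred_eq_of_pos hk).symm⟩
  set P : ℚ⟦X⟧ := ∑ j ∈ Finset.range (m + 1 + 1),
      PowerSeries.C (c (m + 1) j) * PowerSeries.X ^ j with hP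
  set Q : ℚ⟦X⟧ := ∑ j ∈ Finset.range (m + 1 + 1),
      PowerSeries.C ((q (m + 1) j : ℚ)) * PowerSeries.X ^ j with hQdef
  -- pointwise coefficient identity from IsC / IsQ
  have key : ∀ j : ℕ, (q (m + 1) j : ℚ)
      = (2 * ((m : ℚ) + 1) + 4 * j) * c (m + 1) j + ((j : ℚ) + 1) * c (m + 1) (j + 1) := by
    intro j
    by_cases h : j ≤ m + 1
    · have := hc.2 (m + 1) j (by omega) h
      push_cast at this ⊢
      linarith [this]
    · rw [hq.2.1 _ _ (by omega), hc.1 _ _ (by omega), hc.1 _ _ (by omega)]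
      push_cast
      ring
  have hcif : ∀ j, (if j ≤ m + 1 then c (m + 1) j else 0) = c (m + 1) j := by
    intro j
    split_ifs with h
    · rfl
    · exact (hc.1 _ _ (by omega)).symm
  have hqif : ∀ j, (if j ≤ m + 1 then ((q (m + 1) j : ℚ)) else 0) = (q (m + 1) j : ℚ) := by
    intro j
    split_ifs with h
    · rfl
    · rw [hq.2.1 _ _ (by omega)]
      norm_num
  -- the key power series identity
  have hQ : Q = PowerSeries.C (2 * ((m : ℚ) + 1)) * P + R ^ 2 * d⁄dX ℚ P := by
    rw [hR2]
    ext n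
    have hd : ∀ t, PowerSeries.coeff t (d⁄dX ℚ P)
        = ((t : ℚ) + 1) * c (m + 1) (t + 1) := by
      intro t
      rw [PowerSeries.coeff_derivative, hP, coeff_sumCXpow, hcif]
      ring
    have hXd : PowerSeries.coeff n (PowerSeries.X * d⁄dX ℚ P)
        = (n : ℚ) * c (m + 1) n := by
      cases n with
      | zero => simp
      | succ t =>
        rw [PowerSeries.coeff_succ_X_mul, hd]
        push_cast
        ring
    have expand : (1 + 4 * PowerSeries.X) * d⁄dX ℚ P
        = d⁄dX ℚ P + 4 * (PowerSeries.X * d⁄dX ℚ P) := by ring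
    rw [expand, hQdef, coeff_sumCXpow, hqif, map_add, map_add,
      PowerSeries.coeff_C_mul, hP, coeff_sumCXpow, hcif, hd]
    have h4 : PowerSeries.coeff n (4 * (PowerSeries.X * d⁄dX ℚ P))
        = 4 * ((n : ℚ) * c (m + 1) n) := by
      have : (4 : ℚ⟦X⟧) = PowerSeries.C 4 := by simp [map_ofNat]
      rw [this, PowerSeries.coeff_C_mul, hXd]
    rw [h4, key n]
    ring
  -- derivative facts for R
  have hRne : PowerSeries.constantCoeff R ≠ 0 := by rw [hR0]; exact one_ne_zero
  have hRinv : R * R⁻¹ = 1 := PowerSeries.mul_inv_cancel R hRne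
  have hRdR : R * d⁄dX ℚ R = 2 := by
    have h4 : (4 : ℚ⟦X⟧) = PowerSeries.C 4 := by simp [map_ofNat]
    have h := congrArg (d⁄dX ℚ) hR2
    rw [Derivation.leibniz_pow, h4] at h
    simp [Derivation.leibniz, smul_eq_mul] at h
    rw [← h4] at h
    have h2 : (2 : ℚ⟦X⟧) ≠ 0 := by
      intro hh
      have := congrArg (PowerSeries.constantCoeff) hh
      simp [map_ofNat] at this
    apply mul_left_cancel₀ h2
    rw [h]; norm_num
  have hdR : d⁄dX ℚ R = 2 * R⁻¹ := by
    have := congrArg (fun x => R⁻¹ * x) hRdR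
    simp only [← mul_assoc, PowerSeries.inv_mul_cancel R hRne, one_mul] at this
    rw [this]; ring
  -- now the main computation
  rw [Derivation.leibniz, Derivation.leibniz_pow, hdR, hQ]
  have hC : PowerSeries.C (2 * ((m : ℚ) + 1)) = 2 * ((m : ℚ⟦X⟧) + 1) := by
    simp only [map_mul, map_add, map_one, map_natCast, map_ofNat]
  rw [hC]
  simp only [smul_eq_mul, nsmul_eq_mul]
  push_cast
  linear_combination (-(2 * ((m : ℚ⟦X⟧) + 1)) * P * R ^ m * R⁻¹
    - R ^ (m + 1) * (d⁄dX ℚ P) * (R * R⁻¹ + 1)) * hRinv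
end

section
/- Let P(x,w) ∈ ℚ[[x,w]] be any formal power series and let a, d ≥ 0 be integers. Define P̂(y,u) ∈ ℚ[[y,u]] by substituting x = y·R(u)^{−1} and w = −u·(1+4u)^{−1} into P (this substitution is well defined since the series substituted for w has zero constant term). Then the coefficient of x^a·w^d in P equals (−1)^d times the coefficient of y^a·u^d in R(u)^{a+2d−2}·P̂(y,u). -/
open PowerSeries Finset

noncomputable def comp (g h : PowerSeries ℚ) : PowerSeries ℚ :=
  PowerSeries.mk fun n =>
    ∑ k ∈ Finset.range (n + 1), PowerSeries.coeff (R := ℚ) k g * PowerSeries.coeff (R := ℚ) n (h ^ k)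

noncomputable def wSubst : PowerSeries ℚ :=
  -(PowerSeries.X * (1 + 4 * PowerSeries.X)⁻¹)

noncomputable def hatSubst (R : PowerSeries ℚ) (P : PowerSeries (PowerSeries ℚ)) :
    PowerSeries (PowerSeries ℚ) :=
  PowerSeries.mk fun a =>
    (R⁻¹) ^ a * comp (PowerSeries.coeff (R := PowerSeries ℚ) a P) wSubst

private lemma coeff_neg_one_pow_mul (φ : PowerSeries ℚ) (n k : ℕ) :
    PowerSeries.coeff (R := ℚ) n ((-1 : PowerSeries ℚ) ^ k * φ)
      = (-1 : ℚ) ^ k * PowerSeries.coeff (R := ℚ) n φ := by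
  rw [show ((-1 : PowerSeries ℚ)) ^ k = PowerSeries.C (R := ℚ) ((-1) ^ k) by
      rw [map_pow, map_neg, map_one], PowerSeries.coeff_C_mul]

private lemma coeff_four_mul (φ : PowerSeries ℚ) (n : ℕ) :
    PowerSeries.coeff (R := ℚ) n (4 * φ) = 4 * PowerSeries.coeff (R := ℚ) n φ := by
  rw [← map_ofNat (PowerSeries.C (R := ℚ)) 4, PowerSeries.coeff_C_mul]

private lemma hS0 : PowerSeries.constantCoeff (R := ℚ) (1 + 4 * PowerSeries.X) = 1 := by simp

private lemma hSu :
    (1 + 4 * PowerSeries.X : PowerSeries ℚ) * (1 + 4 * PowerSeries.X)⁻¹ = 1 :=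
  PowerSeries.mul_inv_cancel _ (by rw [hS0]; norm_num)

private lemma coeff_S_pow {m n : ℕ} (h : m < n) :
    PowerSeries.coeff (R := ℚ) n ((1 + 4 * PowerSeries.X : PowerSeries ℚ) ^ m) = 0 := by
  induction m generalizing n with
  | zero =>
      simp only [pow_zero, PowerSeries.coeff_one]
      exact if_neg (by omega)
  | succ m ih =>
      obtain ⟨n, rfl⟩ : ∃ n', n = n' + 1 := ⟨n - 1, (Nat.succ_pred_eq_of_pos (by omega)).symm⟩
      rw [pow_succ, mul_add, mul_one, map_add, ih (by omega)]
      rw [show (1 + 4 * PowerSeries.X : PowerSeries ℚ) ^ m * (4 * PowerSeries.X)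
          = 4 * ((1 + 4 * PowerSeries.X) ^ m * PowerSeries.X) by ring]
      rw [coeff_four_mul, PowerSeries.coeff_succ_mul_X, ih (by omega)]
      simp

private lemma coeff_Xpow_mul_lt (φ : PowerSeries ℚ) {j k : ℕ} (h : j < k) :
    PowerSeries.coeff (R := ℚ) j (PowerSeries.X ^ k * φ) = 0 := by
  rw [PowerSeries.coeff_mul]
  apply Finset.sum_eq_zero
  intro p hp
  rw [PowerSeries.coeff_X_pow]
  rw [Finset.HasAntidiagonal.mem_antidiagonal] at hp
  rw [if_neg (by omega)]
  simp

private lemma key {k d : ℕ} (hk : k ≤ d) :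
    PowerSeries.coeff (R := ℚ) d
      ((1 + 4 * PowerSeries.X : PowerSeries ℚ) ^ d * (1 + 4 * PowerSeries.X)⁻¹ * wSubst ^ k)
      = if k = d then (-1 : ℚ) ^ d else 0 := by
  set S : PowerSeries ℚ := 1 + 4 * PowerSeries.X with hS
  have hw : wSubst ^ k = (-1 : PowerSeries ℚ) ^ k * (PowerSeries.X ^ k * (S⁻¹) ^ k) := by
    rw [wSubst]; ring
  rcases eq_or_lt_of_le hk with rfl | hlt
  · rw [if_pos rfl, hw]
    have e1 : S ^ k * S⁻¹ * ((-1 : PowerSeries ℚ) ^ k * (PowerSeries.X ^ k * (S⁻¹) ^ k))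
        = (-1 : PowerSeries ℚ) ^ k * (PowerSeries.X ^ k * (S ^ k * (S⁻¹) ^ k * S⁻¹)) := by
      ring
    rw [e1, ← mul_pow, hSu, one_pow, one_mul, coeff_neg_one_pow_mul]
    have hXk : PowerSeries.coeff (R := ℚ) k (PowerSeries.X ^ k * S⁻¹)
        = PowerSeries.coeff (R := ℚ) 0 (S⁻¹) := by
      simpa using PowerSeries.coeff_X_pow_mul (S⁻¹) k 0
    rw [hXk, PowerSeries.coeff_zero_eq_constantCoeff, PowerSeries.constantCoeff_inv, hS0]
    simp
  · rw [if_neg (by omega), hw]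
    have e1 : S ^ d * S⁻¹ * ((-1 : PowerSeries ℚ) ^ k * (PowerSeries.X ^ k * (S⁻¹) ^ k))
        = (-1 : PowerSeries ℚ) ^ k *
            (PowerSeries.X ^ k * (S ^ (d - 1 - k) * (S ^ (k + 1) * (S⁻¹) ^ (k + 1)))) := by
      rw [show S ^ d = S ^ (d - 1 - k) * S ^ (k + 1) by rw [← pow_add]; congr 1; omega]
      ring
    rw [e1, ← mul_pow, hSu, one_pow, mul_one, coeff_neg_one_pow_mul]
    have e2 := PowerSeries.coeff_X_pow_mul (S ^ (d - 1 - k)) k (d - k)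
    rw [show d - k + k = d by omega] at e2
    rw [e2, coeff_S_pow (by omega), mul_zero]

private lemma expand (A Q : PowerSeries ℚ) (d : ℕ) :
    PowerSeries.coeff (R := ℚ) d (A * comp Q wSubst)
      = ∑ k ∈ Finset.range (d + 1),
          PowerSeries.coeff (R := ℚ) k Q * PowerSeries.coeff (R := ℚ) d (A * wSubst ^ k) := by
  have hwk : ∀ {j k : ℕ}, j < k → PowerSeries.coeff (R := ℚ) j (wSubst ^ k) = 0 := by
    intro j k h
    have hw : wSubst ^ k = PowerSeries.X ^ k * ((-(1 + 4 * PowerSeries.X)⁻¹) ^ k) := by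
      rw [wSubst]; ring
    rw [hw]; exact coeff_Xpow_mul_lt _ h
  rw [PowerSeries.coeff_mul]
  have step1 : ∀ p ∈ Finset.HasAntidiagonal.antidiagonal d,
      PowerSeries.coeff (R := ℚ) p.1 A * PowerSeries.coeff (R := ℚ) p.2 (comp Q wSubst)
        = ∑ k ∈ Finset.range (d + 1), PowerSeries.coeff (R := ℚ) k Q *
            (PowerSeries.coeff (R := ℚ) p.1 A * PowerSeries.coeff (R := ℚ) p.2 (wSubst ^ k)) := by
    intro p hp
    rw [Finset.HasAntidiagonal.mem_antidiagonal] at hp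
    rw [comp, PowerSeries.coeff_mk, Finset.mul_sum]
    rw [← Finset.sum_subset (Finset.range_subset_range.mpr (by omega : p.2 + 1 ≤ d + 1))]
    · apply Finset.sum_congr rfl; intro k _; ring
    · intro k hk hk2
      rw [Finset.mem_range] at hk hk2
      rw [hwk (by omega)]
      simp
  rw [Finset.sum_congr rfl step1, Finset.sum_comm]
  apply Finset.sum_congr rfl
  intro k _
  rw [← Finset.mul_sum, PowerSeries.coeff_mul]

/-- Let `P(x,w) ∈ ℚ⟦x,w⟧` and let `a, d ≥ 0`.  Then the coefficient of `xᵃ·w^d` in `P`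
equals `(-1)^d` times the coefficient of `yᵃ·u^d` in `R(u)^{a+2d-2}·P̂(y,u)`, where
`R(u)` is the unique square root of `1+4u` with constant term `1` (and the possibly
negative power `R^{a+2d-2}` is written `R^{a+2d}·(R⁻¹)²`). -/
theorem statement7 (R : PowerSeries ℚ) (hR0 : PowerSeries.constantCoeff (R := ℚ) R = 1)
    (hR2 : R ^ 2 = 1 + 4 * PowerSeries.X)
    (P : PowerSeries (PowerSeries ℚ)) (a d : ℕ) :
    PowerSeries.coeff (R := ℚ) d (PowerSeries.coeff (R := PowerSeries ℚ) a P) =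
      (-1 : ℚ) ^ d * PowerSeries.coeff (R := ℚ) d
        (R ^ (a + 2 * d) * (R⁻¹) ^ 2 *
          PowerSeries.coeff (R := PowerSeries ℚ) a (hatSubst R P)) := by
  set Q := PowerSeries.coeff (R := PowerSeries ℚ) a P with hQ
  have hRu : R * R⁻¹ = 1 := PowerSeries.mul_inv_cancel _ (by rw [hR0]; norm_num)
  have hS2 : (1 + 4 * PowerSeries.X : PowerSeries ℚ) * (R⁻¹) ^ 2 = 1 := by
    rw [← hR2, ← mul_pow, hRu, one_pow]
  have hinv2 : (R⁻¹) ^ 2 = (1 + 4 * PowerSeries.X : PowerSeries ℚ)⁻¹ := by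
    calc (R⁻¹) ^ 2
        = (R⁻¹) ^ 2 * ((1 + 4 * PowerSeries.X) * (1 + 4 * PowerSeries.X)⁻¹) := by
          rw [hSu, mul_one]
      _ = ((1 + 4 * PowerSeries.X) * (R⁻¹) ^ 2) * (1 + 4 * PowerSeries.X)⁻¹ := by ring
      _ = (1 + 4 * PowerSeries.X : PowerSeries ℚ)⁻¹ := by rw [hS2, one_mul]
  have hcoeff : PowerSeries.coeff (R := PowerSeries ℚ) a (hatSubst R P)
      = (R⁻¹) ^ a * comp Q wSubst := by
    rw [hatSubst, PowerSeries.coeff_mk]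
  rw [hcoeff]
  have hprod : R ^ (a + 2 * d) * (R⁻¹) ^ 2 * ((R⁻¹) ^ a * comp Q wSubst)
      = (1 + 4 * PowerSeries.X : PowerSeries ℚ) ^ d * (1 + 4 * PowerSeries.X)⁻¹
          * comp Q wSubst := by
    rw [show R ^ (a + 2 * d) * (R⁻¹) ^ 2 * ((R⁻¹) ^ a * comp Q wSubst)
        = (R * R⁻¹) ^ a * ((R ^ 2) ^ d * ((R⁻¹) ^ 2 * comp Q wSubst)) by
          rw [mul_pow, ← pow_mul]; ring]
    rw [hRu, one_pow, one_mul, hR2, hinv2, mul_assoc]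
  rw [hprod, expand]
  have hsum : ∀ k ∈ Finset.range (d + 1),
      PowerSeries.coeff (R := ℚ) k Q * PowerSeries.coeff (R := ℚ) d
          ((1 + 4 * PowerSeries.X : PowerSeries ℚ) ^ d * (1 + 4 * PowerSeries.X)⁻¹ * wSubst ^ k)
        = if k = d then PowerSeries.coeff (R := ℚ) d Q * (-1 : ℚ) ^ d else 0 := by
    intro k hk
    rw [Finset.mem_range] at hk
    rw [key (by omega)]
    by_cases h : k = d
    · subst h; simp
    · simp [h]
  rw [Finset.sum_congr rfl hsum, Finset.sum_ite_eq' _ d, if_pos (Finset.self_mem_range_succ d)]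
  rw [mul_comm (PowerSeries.coeff (R := ℚ) d Q), ← mul_assoc, ← mul_pow]
  norm_num
end

section
/- For any formal power series g ∈ ℚ[[w]] and any integer d ≥ 0, the coefficient of w^d in g(w) equals (−1)^d times the coefficient of u^d in (1+4u)^{d−1}·g(−u·(1+4u)^{−1}), where the substitution is well defined since −u·(1+4u)^{−1} has zero constant term, and (1+4u)^{d−1} denotes the (d−1)-st power of the unit 1+4u in ℚ[[u]] (its inverse when d = 0). -/
open PowerSeries Finset

/-- The coefficient of `uⁿ` in `(1+4u)^m` vanishes when `n > m`. -/
lemma coeff_one_add_four_X_pow (m : ℕ) : ∀ n, m < n →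
    PowerSeries.coeff (R := ℚ) n ((1 + 4 * PowerSeries.X) ^ m) = 0 := by
  induction m with
  | zero =>
    intro n hn
    rw [pow_zero, PowerSeries.coeff_one, if_neg (by omega)]
  | succ m ih =>
    intro n hn
    have hexp : (1 + 4 * PowerSeries.X : PowerSeries ℚ) ^ (m + 1)
        = (1 + 4 * PowerSeries.X) ^ m
          + (PowerSeries.C (R := ℚ) 4 * (1 + 4 * PowerSeries.X) ^ m) * PowerSeries.X := by
      rw [show (PowerSeries.C (R := ℚ) (4 : ℚ)) = (4 : PowerSeries ℚ) from by
        simp only [map_ofNat]]; ring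
    obtain ⟨n, rfl⟩ : ∃ n', n = n' + 1 := ⟨n - 1, by omega⟩
    rw [hexp, map_add, ih _ (by omega), PowerSeries.coeff_succ_mul_X,
      PowerSeries.coeff_C_mul, ih _ (by omega)]
    simp

/-- For any formal power series `g ∈ ℚ⟦w⟧` and any integer `d ≥ 0`, the coefficient of
`w^d` in `g(w)` equals `(-1)^d` times the coefficient of `u^d` in
`(1+4u)^{d-1} · g(-u·(1+4u)⁻¹)`, where `(1+4u)^{d-1}` denotes the `(d-1)`-st power of
the unit `1+4u` (its inverse when `d = 0`), written here as `(1+4u)^d·(1+4u)⁻¹`. -/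
theorem statement8 (g : PowerSeries ℚ) (d : ℕ) :
    PowerSeries.coeff (R := ℚ) d g =
      (-1 : ℚ) ^ d * PowerSeries.coeff (R := ℚ) d
        ((1 + 4 * PowerSeries.X) ^ d * (1 + 4 * PowerSeries.X)⁻¹ *
          comp g (-(PowerSeries.X * (1 + 4 * PowerSeries.X)⁻¹))) := by
  set A : PowerSeries ℚ := 1 + 4 * PowerSeries.X with hA
  set h : PowerSeries ℚ := -(PowerSeries.X * A⁻¹) with hh
  have hA0 : constantCoeff (R := ℚ) A = 1 := by simp [hA]
  have hAinv : A * A⁻¹ = 1 := PowerSeries.mul_inv_cancel _ (by rw [hA0]; norm_num)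
  -- vanishing of low coefficients of powers of h
  have hk0 : ∀ k j : ℕ, j < k → PowerSeries.coeff (R := ℚ) j (h ^ k) = 0 := by
    intro k j hj
    have hdvd : (PowerSeries.X : PowerSeries ℚ) ^ k ∣ h ^ k :=
      pow_dvd_pow_of_dvd ⟨-A⁻¹, by rw [hh]; ring⟩ k
    exact PowerSeries.X_pow_dvd_iff.mp hdvd j hj
  -- the key computation
  have key : ∀ k, k ≤ d → PowerSeries.coeff (R := ℚ) d (A ^ d * A⁻¹ * h ^ k)
      = if k = d then (-1 : ℚ) ^ d else 0 := by
    intro k hkd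
    have hCpow : ((-1 : PowerSeries ℚ)) ^ k = PowerSeries.C (R := ℚ) ((-1 : ℚ) ^ k) := by
      simp
    by_cases hcase : k = d
    · subst hcase
      have heq : A ^ k * A⁻¹ * h ^ k
          = PowerSeries.C (R := ℚ) ((-1 : ℚ) ^ k) * (PowerSeries.X ^ k * A⁻¹) := by
        rw [← hCpow, hh]
        have h1 : A ^ k * (A⁻¹) ^ k = 1 := by rw [← mul_pow, hAinv, one_pow]
        calc A ^ k * A⁻¹ * (-(PowerSeries.X * A⁻¹)) ^ k
            = (-1) ^ k * ((A ^ k * A⁻¹ ^ k) * (PowerSeries.X ^ k * A⁻¹)) := by ring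
          _ = (-1) ^ k * (PowerSeries.X ^ k * A⁻¹) := by rw [h1, one_mul]
      have hz : PowerSeries.coeff (R := ℚ) k (PowerSeries.X ^ k * A⁻¹) = 1 := by
        have h2 := PowerSeries.coeff_X_pow_mul (A⁻¹) k 0
        rw [zero_add] at h2
        rw [h2]
        simp [PowerSeries.constantCoeff_inv, hA0]
      rw [heq, PowerSeries.coeff_C_mul, hz]
      simp
    · have hklt : k < d := lt_of_le_of_ne hkd hcase
      have heq : A ^ d * A⁻¹ * h ^ k
          = PowerSeries.C (R := ℚ) ((-1 : ℚ) ^ k) * (PowerSeries.X ^ k * A ^ (d - (k + 1))) := by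
        rw [← hCpow, hh]
        have hd : d = (d - (k + 1)) + (k + 1) := by omega
        have h1 : A ^ (k + 1) * (A⁻¹) ^ (k + 1) = 1 := by rw [← mul_pow, hAinv, one_pow]
        calc A ^ d * A⁻¹ * (-(PowerSeries.X * A⁻¹)) ^ k
            = A ^ ((d - (k + 1)) + (k + 1)) * A⁻¹ * (-(PowerSeries.X * A⁻¹)) ^ k := by
              rw [← hd]
          _ = (-1) ^ k * ((A ^ (k + 1) * A⁻¹ ^ (k + 1))
                * (PowerSeries.X ^ k * A ^ (d - (k + 1)))) := by
              rw [pow_add]; ring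
          _ = (-1) ^ k * (PowerSeries.X ^ k * A ^ (d - (k + 1))) := by rw [h1, one_mul]
      have hz : PowerSeries.coeff (R := ℚ) d (PowerSeries.X ^ k * A ^ (d - (k + 1))) = 0 := by
        have h2 := PowerSeries.coeff_X_pow_mul (A ^ (d - (k + 1))) k (d - k)
        rw [show d - k + k = d from by omega] at h2
        rw [h2, hA]
        exact coeff_one_add_four_X_pow _ _ (by omega)
      rw [heq, PowerSeries.coeff_C_mul, hz, if_neg hcase]
      ring
  -- main computation
  have hmain : PowerSeries.coeff (R := ℚ) d (A ^ d * A⁻¹ * comp g h)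
      = (-1 : ℚ) ^ d * PowerSeries.coeff (R := ℚ) d g := by
    rw [PowerSeries.coeff_mul]
    have step1 : ∀ p ∈ Finset.HasAntidiagonal.antidiagonal d,
        PowerSeries.coeff (R := ℚ) p.1 (A ^ d * A⁻¹) * PowerSeries.coeff (R := ℚ) p.2 (comp g h)
        = ∑ k ∈ Finset.range (d + 1), PowerSeries.coeff (R := ℚ) k g *
            (PowerSeries.coeff (R := ℚ) p.1 (A ^ d * A⁻¹) * PowerSeries.coeff (R := ℚ) p.2 (h ^ k)) := by
      intro p hp
      have hp2 : p.2 ≤ d := by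
        have := Finset.HasAntidiagonal.mem_antidiagonal.mp hp; omega
      rw [comp, PowerSeries.coeff_mk]
      rw [Finset.mul_sum]
      rw [Finset.sum_subset (Finset.range_subset_range.mpr (by omega : p.2 + 1 ≤ d + 1))]
      · exact Finset.sum_congr rfl fun k _ => by ring
      · intro k _ hk
        rw [hk0 k p.2 (by simp only [Finset.mem_range] at hk ⊢; omega)]
        ring_nf
    rw [Finset.sum_congr rfl step1, Finset.sum_comm]
    have step2 : ∀ k ∈ Finset.range (d + 1),
        (∑ p ∈ Finset.HasAntidiagonal.antidiagonal d, PowerSeries.coeff (R := ℚ) k g *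
          (PowerSeries.coeff (R := ℚ) p.1 (A ^ d * A⁻¹) * PowerSeries.coeff (R := ℚ) p.2 (h ^ k)))
        = PowerSeries.coeff (R := ℚ) k g * (if k = d then (-1 : ℚ) ^ d else 0) := by
      intro k hk
      rw [← Finset.mul_sum, ← PowerSeries.coeff_mul,
        key k (by simp only [Finset.mem_range] at hk; omega)]
    rw [Finset.sum_congr rfl step2]
    rw [Finset.sum_eq_single d]
    · simp [mul_comm]
    · intro k _ hkd; simp [hkd]
    · intro hd; exact absurd (Finset.self_mem_range_succ d) hd
  rw [hmain, ← mul_assoc, ← mul_pow]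
  norm_num
end

section
/- For every integer k ≥ 1, 10·q_{k,k−1} = (k+1)·q_{k,k}. -/
open Finset

/-- For every integer `k ≥ 1`, `10·q_{k,k-1} = (k+1)·q_{k,k}`. -/
theorem statement12 (q : ℕ → ℕ → ℤ) (hq : IsQ q) :
    ∀ k : ℕ, 1 ≤ k → 10 * q k (k - 1) = ((k : ℤ) + 1) * q k k := by
  obtain ⟨h0, hz, hrec⟩ := hq
  -- diagonal recursion
  have diag : ∀ n : ℕ, q (n+1) (n+1) = (6*(n:ℤ)+4) * q n n
      + ∑ m ∈ range (n+1), q m m * q (n-m) (n-m) := by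
    intro n
    rw [hrec (n+1) (n+1) (by omega) le_rfl, if_neg (by omega)]
    have h1 : q (n+1-1) (n+1) = 0 := hz n (n+1) (by omega)
    have h2 : ∀ m ∈ range (n+1),
        (∑ l ∈ range (n+1), q m l * q (n+1-1-m) (n+1-1-l))
          = q m m * q (n-m) (n-m) := by
      intro m hm
      simp only [mem_range] at hm
      rw [Finset.sum_eq_single m]
      · norm_num
      · intro l hl hlm
        simp only [mem_range] at hl
        rcases lt_or_gt_of_ne hlm with h | h
        · have : q (n+1-1-m) (n+1-1-l) = 0 := hz _ _ (by omega)
          rw [this, mul_zero]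
        · rw [hz m l h, zero_mul]
      · intro hm'
        exact absurd (mem_range.mpr hm) hm'
    rw [Finset.sum_congr rfl h2, h1]
    push_cast
    ring
  -- subdiagonal recursion
  have sub : ∀ n : ℕ, 1 ≤ n → q (n+1) n = 6*(n:ℤ) * q n (n-1) + ((n:ℤ)+1) * q n n
      + 2 * ∑ l ∈ range n, q (l+1) l * q (n-1-l) (n-1-l) := by
    intro n hn
    rw [hrec (n+1) n (by omega) (by omega), if_neg (by omega)]
    simp only [Nat.add_sub_cancel]
    have key : (∑ m ∈ range (n+1), ∑ l ∈ range n, q m l * q (n-m) (n-1-l))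
        = 2 * ∑ l ∈ range n, q (l+1) l * q (n-1-l) (n-1-l) := by
      rw [Finset.sum_comm]
      have inner : ∀ l ∈ range n,
          (∑ m ∈ range (n+1), q m l * q (n-m) (n-1-l))
            = q l l * q (n-l) (n-1-l) + q (l+1) l * q (n-1-l) (n-1-l) := by
        intro l hl
        simp only [mem_range] at hl
        have hmem : l ∈ range (n+1) := mem_range.mpr (by omega)
        have herase : (∑ x ∈ (range (n+1)).erase l, q x l * q (n-x) (n-1-l))
            = q (l+1) l * q (n-1-l) (n-1-l) := by
          have hm1 : l + 1 ∈ (range (n+1)).erase l :=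
            Finset.mem_erase.mpr ⟨by omega, mem_range.mpr (by omega)⟩
          have hv : ∀ m ∈ (range (n+1)).erase l, m ≠ l + 1 →
              q m l * q (n-m) (n-1-l) = 0 := by
            intro m hm hml
            simp only [mem_erase, mem_range] at hm
            rcases Nat.lt_or_ge m l with h | h
            · rw [hz m l h, zero_mul]
            · have hzz : q (n-m) (n-1-l) = 0 := hz _ _ (by omega)
              rw [hzz, mul_zero]
          rw [Finset.sum_eq_single_of_mem (l+1) hm1 hv, show n-(l+1) = n-1-l by omega]
        rw [← Finset.add_sum_erase _ _ hmem, herase]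
      rw [Finset.sum_congr rfl inner, Finset.sum_add_distrib]
      have hA : (∑ l ∈ range n, q l l * q (n-l) (n-1-l))
          = ∑ l ∈ range n, q (l+1) l * q (n-1-l) (n-1-l) := by
        rw [← Finset.sum_range_reflect (fun l => q (l+1) l * q (n-1-l) (n-1-l)) n]
        apply Finset.sum_congr rfl
        intro j hj
        simp only [mem_range] at hj
        rw [show n-1-j+1 = n-j by omega, show n-1-(n-1-j) = j by omega, mul_comm]
      rw [hA]
      ring
    rw [key]
    push_cast
    ring
  intro k
  induction k using Nat.strong_induction_on with
  | _ k IH =>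
    intro hk
    match k, hk with
    | 1, _ =>
      have e1 : q 1 0 = 1 := by
        rw [hrec 1 0 le_rfl (by omega)]
        simp [h0]
      have d1 : q 1 1 = 5 := by
        have := diag 0
        simp [h0] at this
        linarith
      norm_num [e1, d1]
    | (n+1+1), _ =>
      set n' := n + 1 with hn'
      have hn : 1 ≤ n' := by omega
      have hd := diag n'
      have he := sub n' hn
      have hen : 10 * q n' (n'-1) = ((n':ℤ)+1) * q n' n' := IH n' (by omega) (by omega)
      have hB : 10 * (∑ l ∈ range n', q (l+1) l * q (n'-1-l) (n'-1-l))
          = ∑ l ∈ range n', ((l:ℤ)+2) * (q (l+1) (l+1) * q (n'-1-l) (n'-1-l)) := by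
        rw [Finset.mul_sum]
        apply Finset.sum_congr rfl
        intro l hl
        simp only [mem_range] at hl
        have h := IH (l+1) (by omega) (by omega)
        simp only [Nat.add_sub_cancel] at h
        push_cast at h ⊢
        linear_combination q (n'-1-l) (n'-1-l) * h
      have h1 : (∑ m ∈ range (n'+1), ((m:ℤ)+1) * (q m m * q (n'-m) (n'-m)))
          = (∑ l ∈ range n', ((l:ℤ)+2) * (q (l+1) (l+1) * q (n'-1-l) (n'-1-l)))
            + 1 * (q 0 0 * q n' n') := by
        rw [Finset.sum_range_succ']
        have ha : ∀ i ∈ range n',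
            (((i+1:ℕ):ℤ)+1) * (q (i+1) (i+1) * q (n'-(i+1)) (n'-(i+1)))
              = ((i:ℤ)+2) * (q (i+1) (i+1) * q (n'-1-i) (n'-1-i)) := by
          intro i hi
          rw [show n'-(i+1) = n'-1-i by omega]
          push_cast
          ring
        rw [Finset.sum_congr rfl ha]
        norm_num
      have hbsum : (∑ m ∈ range n', ((n':ℤ)-(m:ℤ)+1) * (q m m * q (n'-m) (n'-m)))
          = ∑ l ∈ range n', ((l:ℤ)+2) * (q (l+1) (l+1) * q (n'-1-l) (n'-1-l)) := by
        rw [← Finset.sum_range_reflect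
          (fun l => ((l:ℤ)+2) * (q (l+1) (l+1) * q (n'-1-l) (n'-1-l))) n']
        apply Finset.sum_congr rfl
        intro j hj
        simp only [mem_range] at hj
        rw [show n'-1-j+1 = n'-j by omega, show n'-1-(n'-1-j) = j by omega]
        have hc : ((n'-1-j : ℕ) : ℤ) = (n':ℤ) - 1 - (j:ℤ) := by omega
        rw [hc]
        ring
      have h2 : (∑ m ∈ range (n'+1), ((n':ℤ)-(m:ℤ)+1) * (q m m * q (n'-m) (n'-m)))
          = (∑ l ∈ range n', ((l:ℤ)+2) * (q (l+1) (l+1) * q (n'-1-l) (n'-1-l)))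
            + 1 * (q 0 0 * q n' n') := by
        rw [Finset.sum_range_succ, hbsum, Nat.sub_self]
        ring
      have hs : (∑ m ∈ range (n'+1), ((m:ℤ)+1) * (q m m * q (n'-m) (n'-m)))
            + (∑ m ∈ range (n'+1), ((n':ℤ)-(m:ℤ)+1) * (q m m * q (n'-m) (n'-m)))
          = ((n':ℤ)+2) * ∑ m ∈ range (n'+1), q m m * q (n'-m) (n'-m) := by
        rw [← Finset.sum_add_distrib, Finset.mul_sum]
        exact Finset.sum_congr rfl fun m hm => by ring
      have hcast : ((n' : ℕ) : ℤ) = (n : ℤ) + 1 := by rw [hn']; push_cast; ring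
      simp only [Nat.add_sub_cancel]
      push_cast
      linear_combination 10 * he - ((n':ℤ)+2) * hd + 6*(n':ℤ) * hen + 2 * hB
        + hs - h1 - h2 - 2 * (q n' n') * h0
end

section
/- For every integer a ≥ 1, 10·c_{a,a−1} = a·c_{a,a}. -/
open Finset

namespace Statement13Aux

variable {q : ℕ → ℕ → ℤ}

lemma diag_rec (hq : IsQ q) (k : ℕ) :
    q (k+1) (k+1) = (6*(k:ℤ)+4) * q k k
      + ∑ m ∈ range (k+1), q m m * q (k-m) (k-m) := by
  have h := hq.2.2 (k+1) (k+1) (by omega) le_rfl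
  have h0 : q k (k+1) = 0 := hq.2.1 _ _ (by omega)
  simp only [Nat.add_sub_cancel, if_neg (Nat.succ_ne_zero k)] at h
  rw [h, h0]
  have hsum : ∀ m ∈ range (k+1),
      ∑ l ∈ range (k+1), q m l * q (k-m) (k-l) = q m m * q (k-m) (k-m) := by
    intro m hm
    simp only [mem_range] at hm
    rw [Finset.sum_eq_single m]
    · intro l hl hne
      simp only [mem_range] at hl
      rcases lt_or_gt_of_ne hne with h' | h'
      · rw [hq.2.1 (k-m) (k-l) (by omega), mul_zero]
      · rw [hq.2.1 m l h', zero_mul]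
    · intro hm'; exact absurd (mem_range.2 hm) hm'
  rw [Finset.sum_congr rfl hsum]
  push_cast
  ring

lemma offdiag_rec (hq : IsQ q) (k : ℕ) :
    q (k+2) (k+1) = (6*(k:ℤ)+6) * q (k+1) k + ((k:ℤ)+2) * q (k+1) (k+1)
      + 2 * ∑ l ∈ range (k+1), q (l+1) l * q (k-l) (k-l) := by
  have h := hq.2.2 (k+2) (k+1) (by omega) (by omega)
  simp only [Nat.add_sub_cancel, if_neg (Nat.succ_ne_zero k),
    show k+2-1 = k+1 from rfl] at h
  rw [h]
  rw [Finset.sum_comm]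
  have hsum : ∀ l ∈ range (k+1),
      ∑ m ∈ range (k+2), q m l * q (k+1-m) (k-l)
        = q l l * q (k+1-l) (k-l) + q (l+1) l * q (k-l) (k-l) := by
    intro l hl
    simp only [mem_range] at hl
    have hsub : ({l, l+1} : Finset ℕ) ⊆ range (k+2) := by
      intro x hx
      simp only [mem_insert, mem_singleton] at hx
      simp only [mem_range]; omega
    rw [← Finset.sum_subset hsub]
    · rw [Finset.sum_pair (by omega : l ≠ l+1)]
      have : k+1-(l+1) = k-l := by omega
      rw [this]
    · intro x hx hnx
      simp only [mem_range] at hx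
      simp only [mem_insert, mem_singleton, not_or] at hnx
      rcases lt_or_gt_of_ne hnx.1 with h' | h'
      · rw [hq.2.1 x l h', zero_mul]
      · rw [hq.2.1 (k+1-x) (k-l) (by omega), mul_zero]
  rw [Finset.sum_congr rfl hsum, Finset.sum_add_distrib]
  have hrefl := Finset.sum_range_reflect
    (fun l => q l l * q (k+1-l) (k-l)) (k+1)
  have hA : ∑ l ∈ range (k+1), q l l * q (k+1-l) (k-l)
      = ∑ l ∈ range (k+1), q (l+1) l * q (k-l) (k-l) := by
    rw [← hrefl]
    apply Finset.sum_congr rfl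
    intro j hj
    simp only [mem_range] at hj
    have h1 : k+1-1-j = k-j := by omega
    have h2 : k+1-(k-j) = j+1 := by omega
    have h3 : k-(k-j) = j := by omega
    rw [h1, h2, h3, mul_comm]
  rw [hA]
  push_cast
  ring

lemma key (hq : IsQ q) : ∀ k : ℕ, 10 * q (k+1) k = ((k:ℤ)+2) * q (k+1) (k+1) := by
  intro k
  induction k using Nat.strong_induction_on with
  | _ k ih =>
    match k with
    | 0 =>
      have h10 := hq.2.2 1 0 le_rfl (by omega)
      have h11 := hq.2.2 1 1 le_rfl le_rfl
      have h01 : q 0 1 = 0 := hq.2.1 0 1 one_pos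
      simp [Finset.sum_range_one, hq.1, h01] at h10 h11
      rw [h10, h11]; norm_num
    | (k+1) =>
      have hd := diag_rec hq (k+1)
      have ho := offdiag_rec hq k
      have ihk := ih k (by omega)
      have hTB : 10 * ∑ l ∈ range (k+1), q (l+1) l * q (k-l) (k-l)
          = ∑ l ∈ range (k+1), ((l:ℤ)+2) * (q (l+1) (l+1) * q (k-l) (k-l)) := by
        rw [Finset.mul_sum]
        apply Finset.sum_congr rfl
        intro l hl
        simp only [mem_range] at hl
        have := ih l (by omega)
        linear_combination (q (k-l) (k-l)) * this
      have hU1 : ∑ m ∈ range (k+2), ((m:ℤ)+1) * (q m m * q (k+1-m) (k+1-m))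
          = (∑ l ∈ range (k+1), ((l:ℤ)+2) * (q (l+1) (l+1) * q (k-l) (k-l)))
            + q (k+1) (k+1) := by
        rw [Finset.sum_range_succ']
        congr 1
        · apply Finset.sum_congr rfl
          intro i hi
          simp only [mem_range] at hi
          have h1 : k+1-(i+1) = k-i := by omega
          rw [h1]; push_cast; ring
        · simp [hq.1]
      have hU2 : 2 * ∑ m ∈ range (k+2), ((m:ℤ)+1) * (q m m * q (k+1-m) (k+1-m))
          = ((k:ℤ)+3) * ∑ m ∈ range (k+2), q m m * q (k+1-m) (k+1-m) := by
        have hrefl := Finset.sum_range_reflect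
          (fun m => ((m:ℤ)+1) * (q m m * q (k+1-m) (k+1-m))) (k+2)
        have hU' : ∑ m ∈ range (k+2), ((m:ℤ)+1) * (q m m * q (k+1-m) (k+1-m))
            = ∑ m ∈ range (k+2), ((k:ℤ)+2-(m:ℤ)) * (q (k+1-m) (k+1-m) * q m m) := by
          rw [← hrefl]
          apply Finset.sum_congr rfl
          intro j hj
          simp only [mem_range] at hj
          have h1 : k+2-1-j = k+1-j := by omega
          have h2 : k+1-(k+1-j) = j := by omega
          have h3 : ((k+1-j : ℕ) : ℤ) = (k:ℤ)+1-(j:ℤ) := by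
            have : j ≤ k+1 := by omega
            push_cast [Nat.cast_sub this]; ring
          rw [h1, h2, h3]
          ring
        rw [two_mul]
        nth_rewrite 2 [hU']
        rw [← Finset.sum_add_distrib, Finset.mul_sum]
        apply Finset.sum_congr rfl
        intro m hm
        ring
      push_cast
      push_cast at hd ho ihk
      linear_combination ho*10 + (6*(k:ℤ)+6)*ihk + 2*hTB - 2*hU1 + hU2 - ((k:ℤ)+3)*hd

end Statement13Aux

/-- For every integer `a ≥ 1`, `10·c_{a,a-1} = a·c_{a,a}`. -/
theorem statement13 (q : ℕ → ℕ → ℤ) (hq : IsQ q) (c : ℕ → ℕ → ℚ) (hc : IsC q c) :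
    ∀ a : ℕ, 1 ≤ a → 10 * c a (a - 1) = (a : ℚ) * c a a := by
  intro a ha
  obtain ⟨b, rfl⟩ : ∃ b, a = b + 1 := ⟨a-1, by omega⟩
  have h1 := hc.2 (b+1) (b+1) (by omega) le_rfl
  have h2 := hc.2 (b+1) b (by omega) (by omega)
  have h0 : c (b+1) (b+1+1) = 0 := hc.1 _ _ (by omega)
  have h3 := Statement13Aux.key hq b
  have h3' : 10 * ((q (b+1) b : ℤ) : ℚ) = ((b:ℚ)+2) * ((q (b+1) (b+1) : ℤ) : ℚ) := by
    exact_mod_cast congrArg (fun x : ℤ => (x : ℚ)) h3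
  rw [h0] at h1
  simp only [Nat.add_sub_cancel]
  have hne : (6*(b:ℚ)+2) ≠ 0 := by positivity
  apply mul_left_cancel₀ hne
  push_cast at h1 h2 ⊢
  linear_combination (-10)*h2 + h3' + ((b:ℚ)+2)*h1
end

section
/- The diagonal generating function S(z) := Σ_{k≥0} q_{k,k}·z^k ∈ ℚ[[z]] satisfies the differential equation S = 1 + 6z²·S′ + 4z·S + z·S², where S′ denotes the formal derivative of S. -/
open PowerSeries Finset

lemma diag_rec (q : ℕ → ℕ → ℤ) (hq : IsQ q) (n : ℕ) :
    q (n+1) (n+1) = (6 * (n : ℤ) + 4) * q n n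
      + ∑ m ∈ Finset.range (n+1), q m m * q (n - m) (n - m) := by
  obtain ⟨h0, h1, h2⟩ := hq
  have h := h2 (n+1) (n+1) (Nat.le_add_left 1 n) le_rfl
  simp only [Nat.add_sub_cancel, Nat.succ_ne_zero, if_false] at h
  rw [h, h1 n (n+1) (Nat.lt_succ_self n)]
  have hsum : ∀ m ∈ Finset.range (n+1),
      (∑ l ∈ Finset.range (n+1), q m l * q (n - m) (n - l)) = q m m * q (n - m) (n - m) := by
    intro m hm
    rw [Finset.mem_range] at hm
    apply Finset.sum_eq_single_of_mem m (Finset.mem_range.2 hm)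
    intro l hl hlm
    rw [Finset.mem_range] at hl
    rcases lt_or_gt_of_ne hlm with hlt | hgt
    · rw [h1 (n - m) (n - l) (by omega), mul_zero]
    · rw [h1 m l hgt, zero_mul]
  rw [Finset.sum_congr rfl hsum]
  push_cast
  ring

/-- The diagonal generating function `S(z) := ∑_{k≥0} q_{k,k} zᵏ ∈ ℚ⟦z⟧` satisfies the
differential equation `S = 1 + 6z²·S′ + 4z·S + z·S²`. -/
theorem statement14 (q : ℕ → ℕ → ℤ) (hq : IsQ q)
    (S : PowerSeries ℚ) (hS : S = PowerSeries.mk fun k => (q k k : ℚ)) :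
    S = 1 + 6 * PowerSeries.X ^ 2 * (d⁄dX ℚ S) + 4 * PowerSeries.X * S +
        PowerSeries.X * S ^ 2 := by
  have hXd : ∀ m : ℕ, (coeff m) (X * d⁄dX ℚ S) = (m : ℚ) * coeff m S := by
    intro m
    cases m with
    | zero => simp [coeff_zero_eq_constantCoeff]
    | succ m =>
        rw [coeff_succ_X_mul, coeff_derivative]
        push_cast
        ring
  ext n
  have e2 : (6 : ℚ⟦X⟧) * X ^ 2 * (d⁄dX ℚ S) = X ^ 1 * ((6 : ℚ) • (X * d⁄dX ℚ S)) := by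
    simp [smul_eq_C_mul, map_ofNat]
    ring
  have e3 : (4 : ℚ⟦X⟧) * X * S = X ^ 1 * ((4 : ℚ) • S) := by
    simp [smul_eq_C_mul, map_ofNat]
    ring
  have e4 : (X : ℚ⟦X⟧) * S ^ 2 = X ^ 1 * (S * S) := by ring
  rw [map_add, map_add, map_add, e2, e3, e4, coeff_X_pow_mul', coeff_X_pow_mul',
    coeff_X_pow_mul', coeff_one]
  cases n with
  | zero =>
      simp [hS, hq.1]
  | succ n =>
      simp only [Nat.succ_ne_zero, if_false, if_pos (Nat.le_add_left 1 n), zero_add,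
        Nat.add_sub_cancel, map_smul, smul_eq_mul, hXd, coeff_mul]
      rw [Finset.Nat.sum_antidiagonal_eq_sum_range_succ_mk]
      simp only [hS, coeff_mk]
      rw [show ((q (n+1) (n+1) : ℚ)) = ((((6 * (n:ℤ) + 4) * q n n
          + ∑ m ∈ Finset.range (n+1), q m m * q (n - m) (n - m)) : ℤ) : ℚ) by
        exact_mod_cast congrArg (Int.cast : ℤ → ℚ) (diag_rec q hq n)]
      push_cast
      ring
end

section
/- The formal power series P(z) = Σ_{k≥0} (6k)!/((3k)!·(2k)!) · z^k/72^k is the unique formal power series in ℚ[[z]] with constant term 1 satisfying the linear differential equation 6·P′ = 5·P + 36z²·P″ + 72z·P′, where P′ and P″ denote the first and second formal derivatives. -/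
open PowerSeries

lemma coeff_lhs (Q : ℚ⟦X⟧) (n : ℕ) :
    coeff n (6 * d⁄dX ℚ Q) = (6 * (n+1) : ℚ) * coeff (n+1) Q := by
  rw [show (6:ℚ⟦X⟧) = C 6 from (map_ofNat _ _).symm, coeff_C_mul, coeff_derivative]
  ring

lemma coeff_rhs (Q : ℚ⟦X⟧) (n : ℕ) :
    coeff n (5 * Q + 36 * X ^ 2 * (d⁄dX ℚ (d⁄dX ℚ Q)) + 72 * X * d⁄dX ℚ Q)
      = ((6 * n + 1) * (6 * n + 5) : ℚ) * coeff n Q := by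
  rw [map_add, map_add,
    show (5:ℚ⟦X⟧) = C 5 from (map_ofNat _ _).symm, coeff_C_mul,
    mul_assoc (36:ℚ⟦X⟧), show (36:ℚ⟦X⟧) = C 36 from (map_ofNat _ _).symm, coeff_C_mul,
    mul_assoc (72:ℚ⟦X⟧), show (72:ℚ⟦X⟧) = C 72 from (map_ofNat _ _).symm, coeff_C_mul]
  match n with
  | 0 =>
    rw [coeff_X_pow_mul']
    simp [coeff_derivative]
  | 1 =>
    rw [coeff_X_pow_mul']
    simp [coeff_derivative, coeff_succ_X_mul]
    ring
  | (m+2) =>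
    rw [coeff_X_pow_mul, show m + 2 = (m+1) + 1 from rfl, coeff_succ_X_mul,
      coeff_derivative, coeff_derivative]
    push_cast
    ring

lemma a_rec (n : ℕ) :
    (6*(n+1):ℚ) * ((Nat.factorial (6*(n+1)) : ℚ) /
        ((Nat.factorial (3*(n+1)) : ℚ) * (Nat.factorial (2*(n+1)) : ℚ) * 72 ^ (n+1)))
    = ((6*n+1)*(6*n+5) : ℚ) * ((Nat.factorial (6*n) : ℚ) /
        ((Nat.factorial (3*n) : ℚ) * (Nat.factorial (2*n) : ℚ) * 72 ^ n)) := by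
  have e6 : 6*(n+1) = 6*n+1+1+1+1+1+1 := by ring
  have e3 : 3*(n+1) = 3*n+1+1+1 := by ring
  have e2 : 2*(n+1) = 2*n+1+1 := by ring
  rw [e6, e3, e2]
  simp only [Nat.factorial_succ]
  have h6 : ((6*n).factorial : ℚ) ≠ 0 := Nat.cast_ne_zero.mpr (Nat.factorial_pos _).ne'
  have h3 : ((3*n).factorial : ℚ) ≠ 0 := Nat.cast_ne_zero.mpr (Nat.factorial_pos _).ne'
  have h2 : ((2*n).factorial : ℚ) ≠ 0 := Nat.cast_ne_zero.mpr (Nat.factorial_pos _).ne'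
  have h72 : (72:ℚ)^n ≠ 0 := pow_ne_zero _ (by norm_num)
  field_simp
  push_cast
  ring

/-- The formal power series `P(z) = ∑_{k≥0} (6k)!/((3k)!·(2k)!) · zᵏ/72ᵏ` is the unique
formal power series in `ℚ⟦z⟧` with constant term `1` satisfying the linear differential
equation `6·P′ = 5·P + 36z²·P″ + 72z·P′`. -/
theorem statement15
    (P : PowerSeries ℚ)
    (hP : P = PowerSeries.mk fun k =>
      (Nat.factorial (6 * k) : ℚ) /
        ((Nat.factorial (3 * k) : ℚ) * (Nat.factorial (2 * k) : ℚ) * 72 ^ k)) :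
    (PowerSeries.constantCoeff P = 1 ∧
      6 * d⁄dX ℚ P = 5 * P + 36 * PowerSeries.X ^ 2 * (d⁄dX ℚ (d⁄dX ℚ P)) +
        72 * PowerSeries.X * d⁄dX ℚ P) ∧
    ∀ Q : PowerSeries ℚ, PowerSeries.constantCoeff Q = 1 →
      6 * d⁄dX ℚ Q = 5 * Q + 36 * PowerSeries.X ^ 2 * (d⁄dX ℚ (d⁄dX ℚ Q)) +
        72 * PowerSeries.X * d⁄dX ℚ Q →
      Q = P := by
  subst hP
  refine ⟨⟨by simp [Nat.factorial], ?_⟩, ?_⟩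
  · ext n
    rw [coeff_lhs, coeff_rhs, coeff_mk, coeff_mk]
    exact a_rec n
  · intro Q h0 hode
    ext n
    rw [coeff_mk]
    induction n with
    | zero => simpa [Nat.factorial, ← coeff_zero_eq_constantCoeff] using h0
    | succ m ih =>
      have h := congrArg (coeff m) hode
      rw [coeff_lhs, coeff_rhs, ih] at h
      have h6 : (6 * ((m:ℚ)+1) : ℚ) ≠ 0 := by positivity
      have ha := a_rec m
      push_cast at h ha
      exact mul_left_cancel₀ h6 (h.trans ha.symm)
end
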